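/- arXiv:2207.11861 — 6 statements merged into one kernel-verified Lean document; each statement's English description precedes it below -/
import Mathlib

section
/- For positive integers p and q and divisors d, e of q, the sum of C_d(a)·C_e(b) over all pairs (a,b) with 0 ≤ a,b ≤ q−1 and a+b ≡ p (mod q) equals q·C_d(p) if d = e, and equals 0 if d ≠ e, where C_d(b) = Σ_{1≤k≤d, gcd(k,d)=1} e^{2πi k b/d} is the Ramanujan sum. -/
/-- Ramanujan sum `C_d(b) = Σ_{1 ≤ k ≤ d, gcd(k,d)=1} e^{2πikb/d}`. -/
noncomputable def RamanujanSum (d : ℕ) (b : ℤ) : ℂ :=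
  ∑ k ∈ (Finset.Icc 1 d).filter (fun k => Nat.gcd k d = 1),
    Complex.exp (2 * Real.pi * Complex.I * k * b / d)

open Finset

/-- `E N m = exp(2πi m / N)`. -/
noncomputable def Eu (N : ℕ) (m : ℤ) : ℂ :=
  Complex.exp (2 * Real.pi * Complex.I * m / N)

lemma Eu_add (N : ℕ) (m n : ℤ) : Eu N (m + n) = Eu N m * Eu N n := by
  rw [Eu, Eu, Eu, ← Complex.exp_add]
  congr 1
  push_cast
  ring

lemma Eu_pow (N : ℕ) (m : ℤ) (a : ℕ) : Eu N m ^ a = Eu N (m * a) := by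
  rw [Eu, Eu, ← Complex.exp_nat_mul]
  congr 1
  push_cast
  ring

lemma two_pi_I_ne_zero : (2 * (Real.pi : ℂ) * Complex.I) ≠ 0 := by
  simp [Real.pi_ne_zero, Complex.I_ne_zero]

lemma Eu_eq_one_iff {N : ℕ} (hN : 0 < N) (m : ℤ) : Eu N m = 1 ↔ (N : ℤ) ∣ m := by
  have hN' : (N : ℂ) ≠ 0 := Nat.cast_ne_zero.mpr hN.ne'
  rw [Eu, Complex.exp_eq_one_iff]
  constructor
  · rintro ⟨n, h⟩
    refine ⟨n, ?_⟩
    have h2 : (m : ℂ) = ((N : ℤ) * n : ℤ) := by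
      field_simp at h
      apply mul_left_cancel₀ two_pi_I_ne_zero
      push_cast
      rw [h]
    exact_mod_cast h2
  · rintro ⟨t, rfl⟩
    refine ⟨t, ?_⟩
    field_simp
    simp

lemma Eu_congr {N : ℕ} (hN : 0 < N) {m n : ℤ} (h : (N : ℤ) ∣ m - n) : Eu N m = Eu N n := by
  obtain ⟨t, ht⟩ := h
  have hm : m = n + N * t := by linarith
  rw [hm, Eu_add, (Eu_eq_one_iff hN _).mpr ⟨t, rfl⟩, mul_one]

lemma Eu_mul_base {N : ℕ} (M : ℕ) (hM : 0 < M) (m : ℤ) : Eu N m = Eu (N * M) (m * M) := by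
  have hM' : (M : ℂ) ≠ 0 := Nat.cast_ne_zero.mpr hM.ne'
  rw [Eu, Eu]
  congr 1
  push_cast
  rw [mul_div_assoc, mul_div_assoc]
  congr 1
  rw [mul_div_mul_right _ _ hM']

lemma Eu_geom {N q : ℕ} (hN : 0 < N) (m : ℤ) (h : (N : ℤ) ∣ m * q) :
    ∑ a ∈ range q, Eu N (m * a) = if (N : ℤ) ∣ m then (q : ℂ) else 0 := by
  simp_rw [← Eu_pow]
  by_cases hdvd : (N : ℤ) ∣ m
  · rw [if_pos hdvd, (Eu_eq_one_iff hN m).mpr hdvd]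
    simp
  · rw [if_neg hdvd]
    have hz : Eu N m ≠ 1 := fun hh => hdvd ((Eu_eq_one_iff hN m).mp hh)
    rw [geom_sum_eq hz]
    have hq1 : Eu N m ^ q = 1 := by rw [Eu_pow]; exact (Eu_eq_one_iff hN _).mpr h
    rw [hq1, sub_self, zero_div]

lemma key_dvd {d e k l : ℕ} (hd : 0 < d) (he : 0 < e)
    (hk1 : 1 ≤ k) (hkd : k ≤ d) (hkg : Nat.gcd k d = 1)
    (hl1 : 1 ≤ l) (hle : l ≤ e) (hlg : Nat.gcd l e = 1) :
    ((d * e : ℕ) : ℤ) ∣ ((k : ℤ) * e - l * d) ↔ (d = e ∧ k = l) := by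
  constructor
  · intro h
    have hck : IsCoprime (d : ℤ) (k : ℤ) := by
      rw [Int.isCoprime_iff_gcd_eq_one]
      simpa [Int.gcd, Nat.gcd_comm] using hkg
    have hcl : IsCoprime (e : ℤ) (l : ℤ) := by
      rw [Int.isCoprime_iff_gcd_eq_one]
      simpa [Int.gcd, Nat.gcd_comm] using hlg
    have hde : d = e := by
      have h1 : (d : ℤ) ∣ (k : ℤ) * e := by
        have hdd : (d : ℤ) ∣ ((k : ℤ) * e - l * d) :=
          dvd_trans (by exact_mod_cast Dvd.intro e rfl) h
        have h3 : (d:ℤ) ∣ (l:ℤ) * d := ⟨l, mul_comm _ _⟩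
        have := dvd_add hdd h3
        have heq : (k : ℤ) * e - l * d + l * d = (k:ℤ) * e := by ring
        rwa [heq] at this
      have h2 : (e : ℤ) ∣ (l : ℤ) * d := by
        have hee : (e : ℤ) ∣ ((k : ℤ) * e - l * d) :=
          dvd_trans (by exact_mod_cast Dvd.intro_left d rfl) h
        have h3 : (e:ℤ) ∣ (k:ℤ) * e := ⟨k, mul_comm _ _⟩
        have := dvd_sub h3 hee
        have heq : (k:ℤ) * e - ((k : ℤ) * e - l * d) = (l:ℤ) * d := by ring
        rwa [heq] at this
      have h1' : (d : ℤ) ∣ (e : ℤ) := hck.dvd_of_dvd_mul_left h1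
      have h2' : (e : ℤ) ∣ (d : ℤ) := hcl.dvd_of_dvd_mul_left h2
      exact Nat.dvd_antisymm (by exact_mod_cast h1') (by exact_mod_cast h2')
    subst hde
    refine ⟨rfl, ?_⟩
    have h3 : ((d : ℤ) * d) ∣ ((k : ℤ) - l) * d := by
      have : ((k : ℤ) - l) * d = (k : ℤ) * d - l * d := by ring
      rw [this]
      exact_mod_cast h
    have h4 : (d : ℤ) ∣ ((k : ℤ) - l) := by
      rcases h3 with ⟨c, hc⟩
      refine ⟨c, ?_⟩
      have hd' : (d : ℤ) ≠ 0 := by exact_mod_cast hd.ne'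
      have : ((k : ℤ) - l) * d = (d : ℤ) * c * d := by rw [hc]; ring
      exact mul_right_cancel₀ hd' this
    have h5 : |(k : ℤ) - l| < d := by
      rw [abs_lt]
      constructor <;> [omega; omega]
    have := Int.eq_zero_of_abs_lt_dvd h4 h5
    omega
  · rintro ⟨rfl, rfl⟩
    simp


lemma RamanujanSum_eq (n : ℕ) (b : ℤ) :
    RamanujanSum n b = ∑ k ∈ (Finset.Icc 1 n).filter (fun k => Nat.gcd k n = 1),
      Eu n (k * b) := by
  unfold RamanujanSum Eu
  refine Finset.sum_congr rfl fun k _ => ?_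
  congr 1
  push_cast
  ring

/-- Carmichael/Cohen orthogonality for Ramanujan sums. -/
theorem ramanujan_orthogonality (p q d e : ℕ) (hp : 0 < p) (hq : 0 < q)
    (hd : d ∣ q) (he : e ∣ q) :
    ∑ x ∈ (Finset.range q ×ˢ Finset.range q).filter
        (fun x => (x.1 + x.2) % q = p % q),
      RamanujanSum d x.1 * RamanujanSum e x.2 =
    if d = e then (q : ℂ) * RamanujanSum d p else 0 := by
  have hd0 : 0 < d := Nat.pos_of_dvd_of_pos hd hq
  have he0 : 0 < e := Nat.pos_of_dvd_of_pos he hq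
  set Sd := (Finset.Icc 1 d).filter (fun k => Nat.gcd k d = 1) with hSd
  set Se := (Finset.Icc 1 e).filter (fun k => Nat.gcd k e = 1) with hSe
  -- key fact about the second coordinate
  have hsecond : ∀ x : ℕ × ℕ, x ∈ (Finset.range q ×ˢ Finset.range q).filter
        (fun x => (x.1 + x.2) % q = p % q) → (p + q - x.1) % q = x.2 := by
    rintro ⟨a, b⟩ hx
    simp only [Finset.mem_filter, Finset.mem_product, Finset.mem_range] at hx
    obtain ⟨⟨ha, hb⟩, hmod⟩ := hx
    have h1 : (p + q - a) + a = p + q := by omega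
    have h2 : ((p + q - a) + a) % q = (b + a) % q := by
      rw [h1, Nat.add_mod_right]
      rw [← hmod, Nat.add_comm a b]
    have h3 : (p + q - a) ≡ b [MOD q] := Nat.ModEq.add_right_cancel' a h2
    rw [Nat.ModEq] at h3
    rw [h3, Nat.mod_eq_of_lt hb]
  -- Step 1: reduce to a single sum over a
  have step1 : ∑ x ∈ (Finset.range q ×ˢ Finset.range q).filter
        (fun x => (x.1 + x.2) % q = p % q),
      RamanujanSum d x.1 * RamanujanSum e x.2
      = ∑ a ∈ Finset.range q, RamanujanSum d a * RamanujanSum e (((p + q - a) % q : ℕ)) := by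
    refine Finset.sum_nbij' (fun x => x.1) (fun a => (a, (p + q - a) % q)) ?_ ?_ ?_ ?_ ?_
    · intro x hx
      simp only [Finset.mem_filter, Finset.mem_product, Finset.mem_range] at hx ⊢
      exact hx.1.1
    · intro a ha
      simp only [Finset.mem_filter, Finset.mem_product, Finset.mem_range] at ha ⊢
      refine ⟨⟨ha, Nat.mod_lt _ hq⟩, ?_⟩
      have h1 : (a + (p + q - a) % q) % q = (a + (p + q - a)) % q :=
        Nat.ModEq.add_left a (Nat.mod_modEq _ q)
      rw [h1]
      have h2 : a + (p + q - a) = p + q := by omega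
      rw [h2, Nat.add_mod_right]
    · intro x hx
      have := hsecond x hx
      exact Prod.ext rfl this
    · intro a _; rfl
    · intro x hx
      have := hsecond x hx
      rw [this]
  rw [step1]
  -- Step 2: expand both Ramanujan sums and swap
  have step2 : ∑ a ∈ Finset.range q, RamanujanSum d a * RamanujanSum e (((p + q - a) % q : ℕ))
      = ∑ k ∈ Sd, ∑ l ∈ Se, ∑ a ∈ Finset.range q,
          Eu d (k * a) * Eu e (l * ((p + q - a) % q : ℕ)) := by
    simp_rw [RamanujanSum_eq, ← hSd, ← hSe, Finset.sum_mul_sum]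
    rw [Finset.sum_comm]
    refine Finset.sum_congr rfl fun k _ => Finset.sum_comm
  rw [step2]
  -- Step 3: inner sum evaluation
  have step3 : ∀ k ∈ Sd, ∀ l ∈ Se,
      ∑ a ∈ Finset.range q, Eu d (k * a) * Eu e (l * ((p + q - a) % q : ℕ))
      = if d = e ∧ k = l then (q : ℂ) * Eu e (l * (p + q)) else 0 := by
    intro k hk l hl
    rw [hSd, Finset.mem_filter, Finset.mem_Icc] at hk
    rw [hSe, Finset.mem_filter, Finset.mem_Icc] at hl
    obtain ⟨⟨hk1, hkd⟩, hkg⟩ := hk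
    obtain ⟨⟨hl1, hle⟩, hlg⟩ := hl
    have hterm : ∀ a ∈ Finset.range q,
        Eu d (k * a) * Eu e (l * ((p + q - a) % q : ℕ))
        = Eu e (l * (p + q)) * Eu (d * e) (((k : ℤ) * e - l * d) * a) := by
      intro a ha
      rw [Finset.mem_range] at ha
      -- remove the mod
      have hmod : Eu e ((l : ℤ) * ((p + q - a) % q : ℕ)) = Eu e ((l : ℤ) * ((p : ℤ) + q - a)) := by
        apply Eu_congr he0
        have hcast : (((p + q - a) % q : ℕ) : ℤ) = ((p : ℤ) + q - a) % q := by
          push_cast [Nat.cast_sub (by omega : a ≤ p + q)]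
          ring_nf
        rw [hcast]
        have hqd : (q : ℤ) ∣ (((p : ℤ) + q - a) % q - ((p : ℤ) + q - a)) := by
          rw [Int.emod_def]
          exact ⟨-(((p : ℤ) + q - a) / q), by ring⟩
        have : (e : ℤ) ∣ ((l : ℤ) * (((p : ℤ) + q - a) % q - ((p : ℤ) + q - a))) :=
          Dvd.dvd.mul_left (dvd_trans (by exact_mod_cast he) hqd) _
        have heq : (l : ℤ) * (((p : ℤ) + q - a) % q) - (l : ℤ) * ((p : ℤ) + q - a)
            = (l : ℤ) * (((p : ℤ) + q - a) % q - ((p : ℤ) + q - a)) := by ring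
        rw [heq]
        exact this
      rw [hmod]
      have hsplit : Eu e ((l : ℤ) * ((p : ℤ) + q - a))
          = Eu e ((l : ℤ) * (p + q)) * Eu e (-((l : ℤ) * a)) := by
        rw [← Eu_add]
        congr 1
        ring
      rw [hsplit]
      have h1 : Eu d ((k : ℤ) * a) = Eu (d * e) (((k : ℤ) * a) * e) := Eu_mul_base e he0 _
      have h2 : Eu e (-((l : ℤ) * a)) = Eu (d * e) ((-((l : ℤ) * a)) * d) := by
        rw [Eu_mul_base d hd0 (-((l : ℤ) * a)), Nat.mul_comm e d]
      have h3 : Eu (d * e) (((k : ℤ) * a) * e) * Eu (d * e) ((-((l : ℤ) * a)) * d)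
          = Eu (d * e) (((k : ℤ) * e - l * d) * a) := by
        rw [← Eu_add]
        congr 1
        ring
      calc Eu d ((k : ℤ) * a) * (Eu e ((l : ℤ) * (p + q)) * Eu e (-((l : ℤ) * a)))
          = Eu e ((l : ℤ) * (p + q)) * (Eu d ((k : ℤ) * a) * Eu e (-((l : ℤ) * a))) := by ring
        _ = Eu e ((l : ℤ) * (p + q)) * (Eu (d * e) (((k : ℤ) * a) * e) * Eu (d * e) ((-((l : ℤ) * a)) * d)) := by
            rw [h1, h2]
        _ = Eu e ((l : ℤ) * (p + q)) * Eu (d * e) (((k : ℤ) * e - l * d) * a) := by rw [h3]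
    rw [Finset.sum_congr rfl hterm, ← Finset.mul_sum]
    have hdiv : ((d * e : ℕ) : ℤ) ∣ ((k : ℤ) * e - l * d) * q := by
      obtain ⟨s, hs⟩ := hd
      obtain ⟨t, ht⟩ := he
      have hq1 : (q : ℤ) = d * s := by exact_mod_cast hs
      have hq2 : (q : ℤ) = e * t := by exact_mod_cast ht
      refine ⟨(k : ℤ) * s - l * t, ?_⟩
      push_cast
      linear_combination ((k : ℤ) * e) * hq1 - ((l : ℤ) * d) * hq2
    rw [Eu_geom (Nat.mul_pos hd0 he0) _ hdiv]
    by_cases hc : d = e ∧ k = l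
    · rw [if_pos ((key_dvd hd0 he0 hk1 hkd hkg hl1 hle hlg).mpr hc), if_pos hc]
      ring
    · rw [if_neg (fun hh => hc ((key_dvd hd0 he0 hk1 hkd hkg hl1 hle hlg).mp hh)), if_neg hc,
        mul_zero]
  rw [Finset.sum_congr rfl (fun k hk => Finset.sum_congr rfl (fun l hl => step3 k hk l hl))]
  -- Step 4: final evaluation
  by_cases hde : d = e
  · subst hde
    rw [if_pos rfl]
    simp only [true_and]
    have hinner : ∀ k ∈ Sd, (∑ l ∈ Sd, if k = l then (q : ℂ) * Eu d (l * (p + q)) else 0)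
        = (q : ℂ) * Eu d (k * p) := by
      intro k hk
      rw [Finset.sum_ite_eq Sd k (fun l => (q : ℂ) * Eu d (l * (p + q))), if_pos hk]
      congr 1
      apply Eu_congr hd0
      obtain ⟨s, hs⟩ := hd
      have hq1 : (q : ℤ) = d * s := by exact_mod_cast hs
      refine ⟨(k : ℤ) * s, ?_⟩
      linear_combination (k : ℤ) * hq1
    rw [Finset.sum_congr rfl hinner, ← Finset.mul_sum, RamanujanSum_eq, ← hSd]
  · rw [if_neg hde]
    refine Finset.sum_eq_zero fun k _ => Finset.sum_eq_zero fun l _ => ?_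
    rw [if_neg (by tauto)]
end

section
/- For positive integers p, q, and a tuple (d_1,…,d_k) of positive integers each dividing q, the sum over all tuples (a_1,…,a_k) with 0 ≤ a_i ≤ q−1 and a_1+⋯+a_k ≡ p (mod q) of the product C_{d_1}(a_1)⋯C_{d_k}(a_k) equals q^{k−1}·C_d(p) if all d_i are equal to a common value d, and equals 0 otherwise. -/
open Finset

section Aux

/-- An additive character applied to a finite sum is the product of its values. -/
lemma addChar_map_finsetSum {A M ι : Type*} [AddCommMonoid A] [CommMonoid M]
    (ψ : AddChar A M) (s : Finset ι) (f : ι → A) :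
    ψ (∑ i ∈ s, f i) = ∏ i ∈ s, ψ (f i) := by
  classical
  induction s using Finset.induction_on with
  | empty => simp
  | insert _ _ h ih => rw [Finset.sum_insert h, Finset.prod_insert h, AddChar.map_add_eq_mul, ih]

variable (q : ℕ) [NeZero q]

/-- The standard primitive `q`-th root of unity. -/
noncomputable def zq : ℂ := Complex.exp (2 * Real.pi * Complex.I / q)

lemma zq_isPrimitiveRoot : IsPrimitiveRoot (zq q) q :=
  Complex.isPrimitiveRoot_exp q (NeZero.ne q)

lemma zq_pow_q : zq q ^ q = 1 := (zq_isPrimitiveRoot q).pow_eq_one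

/-- The standard additive character of `ZMod q` with values in `ℂ`. -/
noncomputable def psiq : AddChar (ZMod q) ℂ := AddChar.zmodChar q (zq_pow_q q)

lemma psiq_isPrimitive : (psiq q).IsPrimitive :=
  AddChar.zmodChar_primitive_of_primitive_root q (zq_isPrimitiveRoot q)

lemma psiq_natCast (n : ℕ) : psiq q (n : ZMod q) = zq q ^ n :=
  AddChar.zmodChar_apply' (zq_pow_q q) n

lemma psiq_mul_natCast (m b : ℕ) : psiq q ((m : ZMod q) * (b : ZMod q)) = zq q ^ (m * b) := by
  rw [← Nat.cast_mul, psiq_natCast]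

lemma psiq_sum (b : ZMod q) :
    ∑ x : ZMod q, psiq q (x * b) = if b = 0 then (q : ℂ) else 0 := by
  rw [AddChar.sum_mulShift b (psiq_isPrimitive q), ZMod.card]
  split_ifs <;> simp

/-- `Fin q` is equivalent to `ZMod q`. -/
def finZify : Fin q ≃ ZMod q where
  toFun x := ((x : ℕ) : ZMod q)
  invFun y := ⟨y.val, y.val_lt⟩
  left_inv x := Fin.ext (by simp [ZMod.val_natCast, Nat.mod_eq_of_lt x.isLt])
  right_inv y := ZMod.natCast_rightInverse y

lemma RS_eq {d : ℕ} (hd : d ∣ q) (b : ℕ) :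
    RamanujanSum d (b : ℤ) =
      ∑ j ∈ (Finset.Icc 1 d).filter (fun j => Nat.gcd j d = 1), zq q ^ (j * (q / d) * b) := by
  have hq0 : (q : ℂ) ≠ 0 := Nat.cast_ne_zero.mpr (NeZero.ne q)
  have hdpos : 0 < d := Nat.pos_of_dvd_of_pos hd (Nat.pos_of_ne_zero (NeZero.ne q))
  have hd0 : (d : ℂ) ≠ 0 := Nat.cast_ne_zero.mpr hdpos.ne'
  unfold RamanujanSum zq
  refine Finset.sum_congr rfl fun j hj => ?_
  rw [← Complex.exp_nat_mul]
  congr 1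
  have key : ((q / d : ℕ) : ℂ) * (d : ℂ) = (q : ℂ) := by
    rw [← Nat.cast_mul, Nat.div_mul_cancel hd]
  rw [← mul_div_assoc, div_eq_div_iff hd0 hq0]
  push_cast
  rw [← key]
  ring

end Aux

section Key

variable {q : ℕ} [NeZero q]

/-- Main character-sum computation:
`q` times the constrained sum equals a full character sum. -/
lemma T_eq (k p : ℕ) (M : Fin k → ℕ) :
    (q : ℂ) *
      ∑ a ∈ Finset.univ.filter
          (fun a : Fin k → Fin q => (∑ i, (a i : ℕ)) % q = p % q),
        ∏ i, psiq q ((M i : ZMod q) * ((a i : ℕ) : ZMod q)) =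
    ∑ t : ZMod q, psiq q (-(t * (p : ZMod q))) *
      ∏ i, (if (M i : ZMod q) + t = 0 then (q : ℂ) else 0) := by
  classical
  set ψ := psiq q
  set S : (Fin k → Fin q) → ZMod q := fun a => ∑ i, ((a i : ℕ) : ZMod q) with hS
  have hP : ∀ a : Fin k → Fin q,
      ((∑ i, (a i : ℕ)) % q = p % q) ↔ S a = (p : ZMod q) := by
    intro a
    simp only [hS]
    rw [← Nat.cast_sum, ZMod.natCast_eq_natCast_iff]
    exact Iff.rfl
  calc (q : ℂ) * ∑ a ∈ Finset.univ.filter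
          (fun a : Fin k → Fin q => (∑ i, (a i : ℕ)) % q = p % q),
        ∏ i, ψ ((M i : ZMod q) * ((a i : ℕ) : ZMod q))
      = ∑ a : Fin k → Fin q, (if S a = (p : ZMod q) then (q : ℂ) else 0) *
          ∏ i, ψ ((M i : ZMod q) * ((a i : ℕ) : ZMod q)) := by
        rw [Finset.mul_sum, Finset.sum_filter]
        refine Finset.sum_congr rfl fun a _ => ?_
        rw [ite_mul, zero_mul, if_congr (hP a) rfl rfl]
    _ = ∑ a : Fin k → Fin q, (∑ t : ZMod q, ψ (t * (S a - p))) *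
          ∏ i, ψ ((M i : ZMod q) * ((a i : ℕ) : ZMod q)) := by
        refine Finset.sum_congr rfl fun a _ => ?_
        rw [psiq_sum q (S a - (p : ZMod q))]
        simp only [sub_eq_zero]
    _ = ∑ a : Fin k → Fin q, ∑ t : ZMod q, ψ (-(t * p)) *
          ∏ i, ψ (((M i : ZMod q) + t) * ((a i : ℕ) : ZMod q)) := by
        refine Finset.sum_congr rfl fun a _ => ?_
        rw [Finset.sum_mul]
        refine Finset.sum_congr rfl fun t _ => ?_
        have h1 : t * (S a - p) = (∑ i, t * ((a i : ℕ) : ZMod q)) + -(t * p) := by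
          rw [hS, mul_sub, Finset.mul_sum, sub_eq_add_neg]
        rw [h1, AddChar.map_add_eq_mul, addChar_map_finsetSum]
        simp only [add_mul, AddChar.map_add_eq_mul]
        rw [Finset.prod_mul_distrib]
        ring
    _ = ∑ t : ZMod q, ψ (-(t * p)) *
          ∑ a : Fin k → Fin q, ∏ i, ψ (((M i : ZMod q) + t) * ((a i : ℕ) : ZMod q)) := by
        rw [Finset.sum_comm]
        exact Finset.sum_congr rfl fun t _ => by rw [Finset.mul_sum]
    _ = ∑ t : ZMod q, ψ (-(t * p)) *
          ∏ i, (if (M i : ZMod q) + t = 0 then (q : ℂ) else 0) := by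
        refine Finset.sum_congr rfl fun t _ => ?_
        congr 1
        have hpi := Finset.sum_prod_piFinset (Finset.univ : Finset (Fin q))
          (fun i x => ψ (((M i : ZMod q) + t) * ((x : ℕ) : ZMod q)))
        rw [← Fintype.piFinset_univ, hpi]
        refine Finset.prod_congr rfl fun i _ => ?_
        rw [← psiq_sum q ((M i : ZMod q) + t)]
        refine Fintype.sum_equiv (finZify q) _ _ fun x => ?_
        rw [mul_comm]
        rfl

lemma T_all_eq (k p : ℕ) (hk : 1 ≤ k) (M : Fin k → ℕ) (m : ℕ)
    (h : ∀ i, (M i : ZMod q) = (m : ZMod q)) :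
    ∑ a ∈ Finset.univ.filter
        (fun a : Fin k → Fin q => (∑ i, (a i : ℕ)) % q = p % q),
      ∏ i, psiq q ((M i : ZMod q) * ((a i : ℕ) : ZMod q)) =
    (q : ℂ) ^ (k - 1) * zq q ^ (m * p) := by
  have hq0 : (q : ℂ) ≠ 0 := Nat.cast_ne_zero.mpr (NeZero.ne q)
  apply mul_left_cancel₀ hq0
  rw [T_eq]
  have hprod : ∀ t : ZMod q,
      (∏ _i : Fin k, ((q : ℂ))) = (q : ℂ) ^ k := by
    intro t
    rw [Finset.prod_const, Finset.card_univ, Fintype.card_fin]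
  have hstep : ∀ t : ZMod q,
      psiq q (-(t * (p : ZMod q))) * (∏ i : Fin k, (if (M i : ZMod q) + t = 0 then (q : ℂ) else 0))
      = if t = -(m : ZMod q) then psiq q (-(t * (p : ZMod q))) * (q : ℂ) ^ k else 0 := by
    intro t
    by_cases ht : t = -(m : ZMod q)
    · rw [if_pos ht]
      congr 1
      rw [← hprod t]
      refine Finset.prod_congr rfl fun i _ => ?_
      rw [if_pos (by rw [h i, ht]; ring)]
    · rw [if_neg ht]
      have hzero : (∏ i : Fin k, if (M i : ZMod q) + t = 0 then (q : ℂ) else 0) = 0 := by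
        refine Finset.prod_eq_zero (Finset.mem_univ (⟨0, hk⟩ : Fin k)) ?_
        refine if_neg fun hc => ht ?_
        rw [← h ⟨0, hk⟩]
        exact eq_neg_of_add_eq_zero_right hc
      rw [hzero, mul_zero]
  rw [Finset.sum_congr rfl fun t _ => hstep t, Finset.sum_ite_eq' Finset.univ
    (-(m : ZMod q)) (fun t => psiq q (-(t * (p : ZMod q))) * (q : ℂ) ^ k),
    if_pos (Finset.mem_univ _)]
  have hval : -(-(m : ZMod q) * (p : ZMod q)) = (m : ZMod q) * (p : ZMod q) := by ring
  rw [hval, psiq_mul_natCast]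
  have hpow : (q : ℂ) * (q : ℂ) ^ (k - 1) = (q : ℂ) ^ k := by
    rw [← pow_succ']
    congr 1
    omega
  rw [← mul_assoc, hpow]
  ring

lemma T_ne (k p : ℕ) (M : Fin k → ℕ) (i1 i2 : Fin k)
    (hM : ((M i1 : ZMod q)) ≠ (M i2 : ZMod q)) :
    ∑ a ∈ Finset.univ.filter
        (fun a : Fin k → Fin q => (∑ i, (a i : ℕ)) % q = p % q),
      ∏ i, psiq q ((M i : ZMod q) * ((a i : ℕ) : ZMod q)) = 0 := by
  have hq0 : (q : ℂ) ≠ 0 := Nat.cast_ne_zero.mpr (NeZero.ne q)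
  apply mul_left_cancel₀ hq0
  rw [T_eq, mul_zero]
  refine Finset.sum_eq_zero fun t _ => ?_
  rw [mul_eq_zero]
  right
  by_cases h1 : (M i1 : ZMod q) + t = 0
  · refine Finset.prod_eq_zero (Finset.mem_univ i2) (if_neg fun h2 => hM ?_)
    have := h1.trans h2.symm
    exact add_right_cancel this
  · exact Finset.prod_eq_zero (Finset.mem_univ i1) (if_neg h1)

lemma mod_inj {q a b : ℕ} (ha1 : 1 ≤ a) (ha2 : a ≤ q) (hb1 : 1 ≤ b) (hb2 : b ≤ q)
    (h : a % q = b % q) : a = b := by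
  have key : ∀ n : ℕ, 1 ≤ n → n ≤ q → n % q = if n = q then 0 else n := by
    intro n h1 h2
    rcases eq_or_lt_of_le h2 with rfl | hlt
    · simp
    · rw [if_neg hlt.ne, Nat.mod_eq_of_lt hlt]
  rw [key a ha1 ha2, key b hb1 hb2] at h
  split_ifs at h <;> omega

lemma key_inj {d1 d2 j1 j2 : ℕ} (h1 : d1 ∣ q) (h2 : d2 ∣ q)
    (hj1l : 1 ≤ j1) (hj1u : j1 ≤ d1) (hg1 : Nat.gcd j1 d1 = 1)
    (hj2l : 1 ≤ j2) (hj2u : j2 ≤ d2) (hg2 : Nat.gcd j2 d2 = 1)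
    (h : ((j1 * (q / d1) : ℕ) : ZMod q) = ((j2 * (q / d2) : ℕ) : ZMod q)) :
    d1 = d2 ∧ j1 = j2 := by
  have hq : 0 < q := Nat.pos_of_ne_zero (NeZero.ne q)
  have hd1 : 0 < d1 := hj1l.trans hj1u
  have hd2 : 0 < d2 := hj2l.trans hj2u
  have hq1 : 0 < q / d1 := Nat.div_pos (Nat.le_of_dvd hq h1) hd1
  have hq2 : 0 < q / d2 := Nat.div_pos (Nat.le_of_dvd hq h2) hd2
  have hmod : (j1 * (q / d1)) % q = (j2 * (q / d2)) % q :=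
    (ZMod.natCast_eq_natCast_iff _ _ _).mp h
  have hu1 : j1 * (q / d1) ≤ q := by
    calc j1 * (q / d1) ≤ d1 * (q / d1) := Nat.mul_le_mul_right _ hj1u
    _ = q := Nat.mul_div_cancel' h1
  have hu2 : j2 * (q / d2) ≤ q := by
    calc j2 * (q / d2) ≤ d2 * (q / d2) := Nat.mul_le_mul_right _ hj2u
    _ = q := Nat.mul_div_cancel' h2
  have heq : j1 * (q / d1) = j2 * (q / d2) :=
    mod_inj (Nat.one_le_iff_ne_zero.mpr (Nat.mul_pos hj1l hq1).ne') hu1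
      (Nat.one_le_iff_ne_zero.mpr (Nat.mul_pos hj2l hq2).ne') hu2 hmod
  have hcross : j1 * d2 = j2 * d1 := by
    have h3 : j1 * (q / d1) * (d1 * d2) = j2 * (q / d2) * (d1 * d2) := by rw [heq]
    have e1 : j1 * (q / d1) * (d1 * d2) = (j1 * d2) * q := by
      rw [show j1 * (q / d1) * (d1 * d2) = (j1 * d2) * ((q / d1) * d1) by ring,
        Nat.div_mul_cancel h1]
    have e2 : j2 * (q / d2) * (d1 * d2) = (j2 * d1) * q := by
      rw [show j2 * (q / d2) * (d1 * d2) = (j2 * d1) * ((q / d2) * d2) by ring,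
        Nat.div_mul_cancel h2]
    rw [e1, e2] at h3
    exact Nat.eq_of_mul_eq_mul_right hq h3
  have c1 : d1 ∣ d2 := by
    have hco : Nat.Coprime d1 j1 := Nat.coprime_comm.mp hg1
    have hdvd : d1 ∣ j1 * d2 := hcross ▸ dvd_mul_left d1 j2
    exact hco.dvd_of_dvd_mul_left hdvd
  have c2 : d2 ∣ d1 := by
    have hco : Nat.Coprime d2 j2 := Nat.coprime_comm.mp hg2
    have hdvd : d2 ∣ j2 * d1 := hcross ▸ dvd_mul_left d2 j1
    exact hco.dvd_of_dvd_mul_left hdvd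
  have hdd : d1 = d2 := Nat.dvd_antisymm c1 c2
  refine ⟨hdd, ?_⟩
  subst hdd
  exact Nat.eq_of_mul_eq_mul_right hd1 hcross

end Key

/-- Multi-factor orthogonality for Ramanujan sums: the sum over tuples
`(a_1,…,a_k)` with `0 ≤ a_i ≤ q-1` and `a_1+⋯+a_k ≡ p (mod q)` of
`C_{d_1}(a_1)⋯C_{d_k}(a_k)` equals `q^{k-1}·C_d(p)` if all `d_i` equal a common
value `d`, and `0` otherwise. -/
theorem ramanujan_orthogonality_general (p q k : ℕ) (hp : 0 < p) (hq : 0 < q)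
    (hk : 1 ≤ k) (d : Fin k → ℕ) (hd : ∀ i, d i ∣ q) :
    (∀ d0 : ℕ, (∀ i, d i = d0) →
      ∑ a ∈ Finset.univ.filter
          (fun a : Fin k → Fin q => (∑ i, (a i : ℕ)) % q = p % q),
        ∏ i, RamanujanSum (d i) (a i) = (q : ℂ) ^ (k - 1) * RamanujanSum d0 p) ∧
    ((¬ ∃ d0 : ℕ, ∀ i, d i = d0) →
      ∑ a ∈ Finset.univ.filter
          (fun a : Fin k → Fin q => (∑ i, (a i : ℕ)) % q = p % q),
        ∏ i, RamanujanSum (d i) (a i) = 0) := by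
  haveI : NeZero q := ⟨hq.ne'⟩
  classical
  set i0 : Fin k := ⟨0, hk⟩ with hi0
  set D : Fin k → Finset ℕ :=
    fun i => (Finset.Icc 1 (d i)).filter (fun j => Nat.gcd j (d i) = 1) with hD
  have hswap : ∑ a ∈ Finset.univ.filter
          (fun a : Fin k → Fin q => (∑ i, (a i : ℕ)) % q = p % q),
        ∏ i, RamanujanSum (d i) (a i) =
      ∑ J ∈ Fintype.piFinset D, ∑ a ∈ Finset.univ.filter
          (fun a : Fin k → Fin q => (∑ i, (a i : ℕ)) % q = p % q),
        ∏ i, psiq q (((J i * (q / d i) : ℕ) : ZMod q) * ((a i : ℕ) : ZMod q)) := by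
    refine Eq.trans (Finset.sum_congr rfl fun a _ => ?_) Finset.sum_comm
    calc ∏ i, RamanujanSum (d i) (a i)
        = ∏ i, ∑ j ∈ D i, zq q ^ (j * (q / d i) * (a i : ℕ)) :=
          Finset.prod_congr rfl fun i _ => RS_eq q (hd i) (a i : ℕ)
      _ = ∑ J ∈ Fintype.piFinset D, ∏ i, zq q ^ (J i * (q / d i) * (a i : ℕ)) :=
          Finset.prod_univ_sum D _
      _ = ∑ J ∈ Fintype.piFinset D,
            ∏ i, psiq q (((J i * (q / d i) : ℕ) : ZMod q) * ((a i : ℕ) : ZMod q)) :=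
          Finset.sum_congr rfl fun J _ =>
            Finset.prod_congr rfl fun i _ => (psiq_mul_natCast q _ _).symm
  have hbounds : ∀ (J : Fin k → ℕ), J ∈ Fintype.piFinset D →
      ∀ i, 1 ≤ J i ∧ J i ≤ d i ∧ Nat.gcd (J i) (d i) = 1 := by
    intro J hJ i
    have := Fintype.mem_piFinset.mp hJ i
    simp only [hD, Finset.mem_filter, Finset.mem_Icc] at this
    exact ⟨this.1.1, this.1.2, this.2⟩
  constructor
  · -- all divisors equal
    intro d0 hall
    have hd0q : d0 ∣ q := by rw [← hall i0]; exact hd i0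
    rw [hswap]
    have hterm : ∀ J ∈ Fintype.piFinset D,
        (∑ a ∈ Finset.univ.filter
            (fun a : Fin k → Fin q => (∑ i, (a i : ℕ)) % q = p % q),
          ∏ i, psiq q (((J i * (q / d i) : ℕ) : ZMod q) * ((a i : ℕ) : ZMod q))) =
        if ∀ i, J i = J i0 then
          (q : ℂ) ^ (k - 1) * zq q ^ (J i0 * (q / d0) * p) else 0 := by
      intro J hJ
      have hJb := hbounds J hJ
      by_cases hcon : ∀ i, J i = J i0
      · rw [if_pos hcon]
        refine T_all_eq k p hk (fun i => J i * (q / d i)) (J i0 * (q / d0)) fun i => ?_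
        show ((J i * (q / d i) : ℕ) : ZMod q) = ((J i0 * (q / d0) : ℕ) : ZMod q)
        rw [hall i, hcon i]
      · rw [if_neg hcon]
        push_neg at hcon
        obtain ⟨i1, hi1⟩ := hcon
        refine T_ne k p (fun i => J i * (q / d i)) i1 i0 fun hEq => hi1 ?_
        exact (key_inj (hd i1) (hd i0) (hJb i1).1 (hJb i1).2.1 (hJb i1).2.2
          (hJb i0).1 (hJb i0).2.1 (hJb i0).2.2 hEq).2
    rw [Finset.sum_congr rfl hterm, ← Finset.sum_filter, RS_eq q hd0q p, Finset.mul_sum]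
    refine Finset.sum_nbij' (fun J => J i0) (fun j => fun _ => j) ?_ ?_ ?_ ?_ ?_
    · intro J hJ
      have hJm := (Finset.mem_filter.mp hJ).1
      have := Fintype.mem_piFinset.mp hJm i0
      simpa only [hD, hall i0] using this
    · intro j hj
      refine Finset.mem_filter.mpr ⟨Fintype.mem_piFinset.mpr fun i => ?_, fun i => rfl⟩
      simpa only [hD, hall i] using hj
    · intro J hJ
      funext i
      exact ((Finset.mem_filter.mp hJ).2 i).symm
    · intro j _
      rfl
    · intro J _
      rfl
  · -- not all divisors equal
    intro hne
    rw [hswap]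
    refine Finset.sum_eq_zero fun J hJ => ?_
    push_neg at hne
    obtain ⟨i1, hi1⟩ := hne (d i0)
    have hJb := hbounds J hJ
    refine T_ne k p (fun i => J i * (q / d i)) i1 i0 fun hEq => hi1 ?_
    exact (key_inj (hd i1) (hd i0) (hJb i1).1 (hJb i1).2.1 (hJb i1).2.2
      (hJb i0).1 (hJb i0).2.1 (hJb i0).2.2 hEq).1
end

section
/- Let G be a connected graph on vertex set [n] and let S ⊂ [n] be nonempty and proper with both G[S] and G[S̄] connected (so ∂(S) is a bond of size d(S)). Then for every integer v with g(G[S]) ≤ v ≤ g(G) − g(G[S̄]), there exists a break divisor D on G such that Σ_{i∈S} D(i) = v; in particular, the linear functional x_S attains exactly d(S) = g(G) − g(G[S]) − g(G[S̄]) + 1 distinct values on the set of break divisors of G. -/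
/-- A finite multigraph without loops. -/
structure Multigraph (V E : Type) where
  ends : E → Sym2 V
  loopless : ∀ e, ¬ (ends e).IsDiag

namespace Multigraph

variable {V E : Type}

/-- The underlying simple graph. -/
def simple (G : Multigraph V E) : SimpleGraph V where
  Adj u v := u ≠ v ∧ ∃ e, u ∈ G.ends e ∧ v ∈ G.ends e
  symm := by
    constructor
    intro u v h
    exact ⟨h.1.symm, h.2.imp fun e he => ⟨he.2, he.1⟩⟩
  loopless := by constructor; intro u h; exact h.1 rfl

/-- The simple graph using only edges from a subset `F ⊆ E`. -/
def subSimple (G : Multigraph V E) (F : Set E) : SimpleGraph V where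
  Adj u v := u ≠ v ∧ ∃ e ∈ F, u ∈ G.ends e ∧ v ∈ G.ends e
  symm := by
    constructor
    intro u v h
    exact ⟨h.1.symm, h.2.imp fun e he => ⟨he.1, he.2.2, he.2.1⟩⟩
  loopless := by constructor; intro u h; exact h.1 rfl

/-- Genus `g(G) = |E| - |V| + 1`. -/
def genus (G : Multigraph V E) [Fintype V] [Fintype E] : ℤ :=
  (Fintype.card E : ℤ) - (Fintype.card V : ℤ) + 1

/-- Edges of the induced subgraph `G[S]`. -/
def insideEdges (G : Multigraph V E) (S : Finset V) : Set E :=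
  {e | ∀ v ∈ G.ends e, v ∈ S}

/-- Genus of the induced subgraph `G[S]`. -/
noncomputable def inducedGenus (G : Multigraph V E) (S : Finset V) : ℤ :=
  ((G.insideEdges S).ncard : ℤ) - (S.card : ℤ) + 1

/-- The edge cut `∂(S)`. -/
def cutEdges (G : Multigraph V E) (S : Finset V) : Set E :=
  {e | (∃ u ∈ G.ends e, u ∈ S) ∧ ∃ v ∈ G.ends e, v ∉ S}

/-- `D` is a break divisor on `G`: an effective divisor of degree `g(G)` whose
restriction to every connected subgraph `H = (S, F)` has degree at least
`g(H) = |F| - |S| + 1`. -/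
def IsBreakDivisor (G : Multigraph V E) [Fintype V] [Fintype E]
    (D : V → ℤ) : Prop :=
  (∀ v, 0 ≤ D v) ∧ (∑ v, D v = G.genus) ∧
    ∀ (S : Finset V) (F : Set E),
      (∀ e ∈ F, ∀ v ∈ G.ends e, v ∈ S) →
      ((G.subSimple F).induce (S : Set V)).Connected →
      (F.ncard : ℤ) - (S.card : ℤ) + 1 ≤ ∑ v ∈ S, D v

end Multigraph

namespace Multigraph

open Finset

variable {V E : Type}

lemma sym2_cases (z : Sym2 V) : ∃ a b, z = s(a, b) := by
  induction z using Sym2.ind with | _ a b => exact ⟨a, b, rfl⟩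

lemma ends_exists_mem (G : Multigraph V E) (e : E) : ∃ v, v ∈ G.ends e := by
  obtain ⟨a, b, hab⟩ := sym2_cases (G.ends e)
  exact ⟨a, by rw [hab]; exact Sym2.mem_mk_left a b⟩

open Classical in
noncomputable def inF (G : Multigraph V E) [Fintype E] (A : Finset V) : Finset E :=
  Finset.univ.filter fun e => ∀ v ∈ G.ends e, v ∈ A

open Classical in
noncomputable def cutF (G : Multigraph V E) [Fintype E] (S : Finset V) : Finset E :=
  Finset.univ.filter fun e => (∃ u ∈ G.ends e, u ∈ S) ∧ ∃ v ∈ G.ends e, v ∉ S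

lemma mem_inF {G : Multigraph V E} [Fintype E] {A : Finset V} {e : E} :
    e ∈ G.inF A ↔ ∀ v ∈ G.ends e, v ∈ A := by
  simp [inF]

lemma mem_cutF {G : Multigraph V E} [Fintype E] {S : Finset V} {e : E} :
    e ∈ G.cutF S ↔ (∃ u ∈ G.ends e, u ∈ S) ∧ ∃ v ∈ G.ends e, v ∉ S := by
  simp [cutF]

lemma ncard_insideEdges (G : Multigraph V E) [Fintype E] (A : Finset V) :
    (G.insideEdges A).ncard = (G.inF A).card := by
  rw [← Set.ncard_coe_finset]
  congr 1
  ext e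
  simp [insideEdges, mem_inF]

lemma ncard_cutEdges (G : Multigraph V E) [Fintype E] (S : Finset V) :
    (G.cutEdges S).ncard = (G.cutF S).card := by
  rw [← Set.ncard_coe_finset]
  congr 1
  ext e
  simp [cutEdges, mem_cutF]

lemma inF_mono (G : Multigraph V E) [Fintype E] {A B : Finset V} (h : A ⊆ B) :
    G.inF A ⊆ G.inF B :=
  fun e he => mem_inF.mpr fun v hv => h (mem_inF.mp he v hv)

lemma disj_inF_compl (G : Multigraph V E) [Fintype V] [Fintype E] [DecidableEq V] (S : Finset V) :
    Disjoint (G.inF S) (G.inF Sᶜ) := by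
  rw [Finset.disjoint_left]
  intro e h1 h2
  obtain ⟨w, hw⟩ := ends_exists_mem G e
  exact (Finset.mem_compl.mp (mem_inF.mp h2 w hw)) (mem_inF.mp h1 w hw)

lemma disj_inF_cut (G : Multigraph V E) [Fintype E] (S : Finset V) :
    Disjoint (G.inF S) (G.cutF S) := by
  rw [Finset.disjoint_left]
  intro e h1 h2
  obtain ⟨-, v, hv, hvS⟩ := mem_cutF.mp h2
  exact hvS (mem_inF.mp h1 v hv)

lemma disj_inFc_cut (G : Multigraph V E) [Fintype V] [Fintype E] [DecidableEq V] (S : Finset V) :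
    Disjoint (G.inF Sᶜ) (G.cutF S) := by
  rw [Finset.disjoint_left]
  intro e h1 h2
  obtain ⟨⟨u, hu, huS⟩, -⟩ := mem_cutF.mp h2
  exact (Finset.mem_compl.mp (mem_inF.mp h1 u hu)) huS

lemma edge_trichotomy (G : Multigraph V E) [Fintype V] [Fintype E] [DecidableEq V] (S : Finset V) (e : E) :
    e ∈ G.inF S ∨ e ∈ G.inF Sᶜ ∨ e ∈ G.cutF S := by
  obtain ⟨a, b, hab⟩ := sym2_cases (G.ends e)
  have hmem : ∀ w, w ∈ G.ends e ↔ w = a ∨ w = b := fun w => by rw [hab, Sym2.mem_iff]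
  by_cases ha : a ∈ S <;> by_cases hb : b ∈ S
  · refine Or.inl (mem_inF.mpr fun w hw => ?_)
    rcases (hmem w).mp hw with rfl | rfl <;> assumption
  · exact Or.inr (Or.inr (mem_cutF.mpr ⟨⟨a, (hmem a).mpr (Or.inl rfl), ha⟩,
      ⟨b, (hmem b).mpr (Or.inr rfl), hb⟩⟩))
  · exact Or.inr (Or.inr (mem_cutF.mpr ⟨⟨b, (hmem b).mpr (Or.inr rfl), hb⟩,
      ⟨a, (hmem a).mpr (Or.inl rfl), ha⟩⟩))
  · refine Or.inr (Or.inl (mem_inF.mpr fun w hw => Finset.mem_compl.mpr ?_))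
    rcases (hmem w).mp hw with rfl | rfl <;> assumption

lemma edges_card_partition (G : Multigraph V E) [Fintype V] [Fintype E] [DecidableEq V] (S : Finset V) :
    Fintype.card E = (G.inF S).card + (G.inF Sᶜ).card + (G.cutF S).card := by
  classical
  have hu : (G.inF S ∪ G.inF Sᶜ) ∪ G.cutF S = Finset.univ := by
    ext e
    simp only [Finset.mem_union, Finset.mem_univ, iff_true]
    rcases edge_trichotomy G S e with h | h | h
    exacts [Or.inl (Or.inl h), Or.inl (Or.inr h), Or.inr h]
  have d2 : Disjoint (G.inF S ∪ G.inF Sᶜ) (G.cutF S) :=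
    Finset.disjoint_union_left.mpr ⟨disj_inF_cut G S, disj_inFc_cut G S⟩
  rw [← Finset.card_univ, ← hu, Finset.card_union_of_disjoint d2,
    Finset.card_union_of_disjoint (disj_inF_compl G S)]

lemma walk_cross {W : Type} {G' : SimpleGraph W} (p : W → Prop) :
    ∀ {x y : W}, G'.Walk x y → p x → ¬ p y → ∃ u v, G'.Adj u v ∧ p u ∧ ¬ p v := by
  intro x y w
  induction w with
  | nil => intro hx hy; exact absurd hx hy
  | @cons a c b h q ih =>
    intro hx hy
    by_cases hc : p c
    · exact ih hc hy
    · exact ⟨a, c, h, hx, hc⟩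

lemma exists_crossing_induced (G : Multigraph V E) (S A : Finset V)
    (hconn : (G.simple.induce (S : Set V)).Connected)
    {a b : V} (haS : a ∈ S) (ha : a ∈ A) (hb : b ∈ S) (hbA : b ∉ A) :
    ∃ (e : E) (u v : V), u ∈ G.ends e ∧ v ∈ G.ends e ∧ u ∈ S ∧ v ∈ S ∧
      u ∈ A ∧ v ∉ A ∧ u ≠ v := by
  obtain ⟨w⟩ := hconn.preconnected ⟨a, by simpa using haS⟩ ⟨b, by simpa using hb⟩
  obtain ⟨u, v, huv, hu, hv⟩ := walk_cross (fun z : (S : Set V) => (z : V) ∈ A) w ha hbA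
  have hadj : G.simple.Adj ↑u ↑v := by simpa using huv
  obtain ⟨hne, e, hue, hve⟩ := hadj
  exact ⟨e, u, v, hue, hve, by simpa using u.2, by simpa using v.2, hu, hv, hne⟩

lemma exists_cut_edge (G : Multigraph V E) (hG : G.simple.Connected) (S : Finset V)
    {a b : V} (ha : a ∈ S) (hb : b ∉ S) :
    ∃ (e : E) (u v : V), u ∈ G.ends e ∧ v ∈ G.ends e ∧ u ∈ S ∧ v ∉ S := by
  obtain ⟨w⟩ := hG.preconnected a b
  obtain ⟨u, v, huv, hu, hv⟩ := walk_cross (fun z => z ∈ S) w ha hb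
  obtain ⟨hne, e, hue, hve⟩ := huv
  exact ⟨e, u, v, hue, hve, hu, hv⟩

lemma subSimple_induce_eq (G : Multigraph V E) (A : Finset V) :
    (G.subSimple (G.insideEdges A)).induce (A : Set V) = G.simple.induce (A : Set V) := by
  ext x y
  constructor
  · intro h
    obtain ⟨hne, e, he, hxe, hye⟩ :=
      (by simpa using h : (G.subSimple (G.insideEdges A)).Adj ↑x ↑y)
    have hadj : G.simple.Adj ↑x ↑y := ⟨hne, e, hxe, hye⟩
    simpa using hadj
  · intro h
    obtain ⟨hne, e, hxe, hye⟩ := (by simpa using h : G.simple.Adj ↑x ↑y)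
    have hein : e ∈ G.insideEdges A := by
      show ∀ w ∈ G.ends e, w ∈ A
      intro w hw
      have hz : G.ends e = s((x : V), (y : V)) := (Sym2.mem_and_mem_iff hne).mp ⟨hxe, hye⟩
      rw [hz, Sym2.mem_iff] at hw
      rcases hw with rfl | rfl
      · simpa using x.2
      · simpa using y.2
    have hadj : (G.subSimple (G.insideEdges A)).Adj ↑x ↑y := ⟨hne, e, hein, hxe, hye⟩
    simpa using hadj

lemma exists_tree (G : Multigraph V E) [Fintype E] [DecidableEq V] [DecidableEq E]
    (S : Finset V) (hS : S.Nonempty) (hconn : (G.simple.induce (S : Set V)).Connected) :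
    ∃ T : Finset E, T ⊆ G.inF S ∧ T.card + 1 = S.card ∧
      ∀ B : Finset V, B.Nonempty → (T ∩ G.inF B).card + 1 ≤ B.card := by
  obtain ⟨a, ha⟩ := hS
  suffices h : ∀ (n : ℕ) (A : Finset V), a ∈ A → A ⊆ S → S.card ≤ A.card + n →
      ∀ T : Finset E, T ⊆ G.inF A → T.card + 1 = A.card →
      (∀ B : Finset V, B.Nonempty → (T ∩ G.inF B).card + 1 ≤ B.card) →
      ∃ T' : Finset E, T' ⊆ G.inF S ∧ T'.card + 1 = S.card ∧
        ∀ B : Finset V, B.Nonempty → (T' ∩ G.inF B).card + 1 ≤ B.card by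
    refine h S.card {a} (Finset.mem_singleton_self a) (Finset.singleton_subset_iff.mpr ha)
      (by simp) ∅ (Finset.empty_subset _) (by simp) ?_
    intro B hB
    simpa using Finset.card_pos.mpr hB
  intro n
  induction n with
  | zero =>
    intro A haA hAS hcard T hT hTcard hforest
    have hAeq : A = S := Finset.eq_of_subset_of_card_le hAS (by omega)
    exact ⟨T, hAeq ▸ hT, hAeq ▸ hTcard, hforest⟩
  | succ n ih =>
    intro A haA hAS hcard T hT hTcard hforest
    by_cases hSA : S ⊆ A
    · have hAeq : A = S := Finset.Subset.antisymm hAS hSA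
      exact ⟨T, hAeq ▸ hT, hAeq ▸ hTcard, hforest⟩
    · obtain ⟨b, hbS, hbA⟩ := Finset.not_subset.mp hSA
      obtain ⟨e, u, v, hue, hve, huS, hvS, huA, hvA, huv⟩ :=
        exists_crossing_induced G S A hconn (hAS haA) haA hbS hbA
      have hz : G.ends e = s(u, v) := (Sym2.mem_and_mem_iff huv).mp ⟨hue, hve⟩
      have hein : e ∈ G.inF (insert v A) := by
        rw [mem_inF]
        intro w hw
        rw [hz, Sym2.mem_iff] at hw
        rcases hw with h | h
        · rw [h]; exact Finset.mem_insert_of_mem huA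
        · rw [h]; exact Finset.mem_insert_self v A
      have heT : e ∉ T := fun h => hvA (mem_inF.mp (hT h) v hve)
      refine ih (insert v A) (Finset.mem_insert_of_mem haA) (Finset.insert_subset hvS hAS)
        ?_ (insert e T) ?_ ?_ ?_
      · rw [Finset.card_insert_of_notMem hvA]; omega
      · intro x hx
        rcases Finset.mem_insert.mp hx with rfl | hx'
        · exact hein
        · exact inF_mono G (Finset.subset_insert v A) (hT hx')
      · rw [Finset.card_insert_of_notMem heT, Finset.card_insert_of_notMem hvA]; omega
      · intro B hB
        by_cases heB : e ∈ G.inF B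
        · have huB : u ∈ B := mem_inF.mp heB u hue
          have hvB : v ∈ B := mem_inF.mp heB v hve
          have h1 : insert e T ∩ G.inF B ⊆ insert e (T ∩ G.inF B) := by
            intro x hx
            obtain ⟨hx1, hx2⟩ := Finset.mem_inter.mp hx
            rcases Finset.mem_insert.mp hx1 with rfl | hx1'
            · exact Finset.mem_insert_self _ _
            · exact Finset.mem_insert_of_mem (Finset.mem_inter.mpr ⟨hx1', hx2⟩)
          have h2 : T ∩ G.inF B = T ∩ G.inF (B ∩ A) := by
            ext x
            constructor
            · intro hx
              obtain ⟨hx1, hx2⟩ := Finset.mem_inter.mp hx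
              exact Finset.mem_inter.mpr ⟨hx1, mem_inF.mpr fun w hw =>
                Finset.mem_inter.mpr ⟨mem_inF.mp hx2 w hw, mem_inF.mp (hT hx1) w hw⟩⟩
            · intro hx
              obtain ⟨hx1, hx2⟩ := Finset.mem_inter.mp hx
              exact Finset.mem_inter.mpr ⟨hx1, mem_inF.mpr fun w hw =>
                (Finset.mem_inter.mp (mem_inF.mp hx2 w hw)).1⟩
          have h3 : (T ∩ G.inF B).card + 1 ≤ (B ∩ A).card := by
            rw [h2]
            exact hforest (B ∩ A) ⟨u, Finset.mem_inter.mpr ⟨huB, huA⟩⟩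
          have h4 : (B ∩ A).card + 1 ≤ B.card := by
            have hsub : B ∩ A ⊆ B.erase v := by
              intro x hx
              obtain ⟨hx1, hx2⟩ := Finset.mem_inter.mp hx
              exact Finset.mem_erase.mpr ⟨fun h => hvA (h ▸ hx2), hx1⟩
            have h5 := Finset.card_le_card hsub
            rw [Finset.card_erase_of_mem hvB] at h5
            have h6 := Finset.card_pos.mpr ⟨v, hvB⟩
            omega
          have h5 := Finset.card_le_card h1
          have h6 := Finset.card_insert_le e (T ∩ G.inF B)
          omega
        · have h0 : insert e T ∩ G.inF B = T ∩ G.inF B := by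
            ext x
            constructor
            · intro hx
              obtain ⟨hx1, hx2⟩ := Finset.mem_inter.mp hx
              rcases Finset.mem_insert.mp hx1 with rfl | hx1'
              · exact absurd hx2 heB
              · exact Finset.mem_inter.mpr ⟨hx1', hx2⟩
            · intro hx
              obtain ⟨hx1, hx2⟩ := Finset.mem_inter.mp hx
              exact Finset.mem_inter.mpr ⟨Finset.mem_insert_of_mem hx1, hx2⟩
          rw [h0]
          exact hforest B hB

lemma exists_breakDivisor_k (G : Multigraph V E) [Fintype V] [Fintype E] [DecidableEq V]
    (hG : G.simple.Connected) (S : Finset V) (hS : S.Nonempty) (hSne : S ≠ Finset.univ)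
    (hconnS : (G.simple.induce (S : Set V)).Connected)
    (hconnSc : (G.simple.induce ((Sᶜ : Finset V) : Set V)).Connected)
    (k : ℕ) (hk : k + 1 ≤ (G.cutF S).card) :
    ∃ D : V → ℤ, G.IsBreakDivisor D ∧ ∑ i ∈ S, D i = G.inducedGenus S + k := by
  classical
  have hScne : (Sᶜ : Finset V).Nonempty := by
    rw [Finset.nonempty_iff_ne_empty]; simpa using hSne
  obtain ⟨TS, hTSsub, hTScard, hTSforest⟩ := exists_tree G S hS hconnS
  obtain ⟨TC, hTCsub, hTCcard, hTCforest⟩ := exists_tree G Sᶜ hScne hconnSc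
  obtain ⟨b, hb⟩ := hScne
  obtain ⟨a, ha⟩ := hS
  obtain ⟨e₀, u₀, v₀, hu₀e, hv₀e, hu₀S, hv₀S⟩ :=
    exists_cut_edge G hG S ha (Finset.mem_compl.mp hb)
  have he₀ : e₀ ∈ G.cutF S := mem_cutF.mpr ⟨⟨u₀, hu₀e, hu₀S⟩, ⟨v₀, hv₀e, hv₀S⟩⟩
  obtain ⟨K, hKsub, hKcard⟩ := Finset.exists_subset_card_eq
    (s := (G.cutF S).erase e₀) (n := k) (by rw [Finset.card_erase_of_mem he₀]; omega)
  have hKcut : K ⊆ G.cutF S := hKsub.trans (Finset.erase_subset _ _)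
  have he₀K : e₀ ∉ K := fun h => (Finset.notMem_erase e₀ _) (hKsub h)
  have hsel : ∀ e : E, ∃ p : V × V, p.1 ∈ G.ends e ∧ p.2 ∈ G.ends e ∧
      (e ∈ G.cutF S → p.1 ∈ S ∧ p.2 ∉ S) := by
    intro e
    by_cases he : e ∈ G.cutF S
    · obtain ⟨⟨u, hu, huS⟩, ⟨v, hv, hvS⟩⟩ := mem_cutF.mp he
      exact ⟨(u, v), hu, hv, fun _ => ⟨huS, hvS⟩⟩
    · obtain ⟨w, hw⟩ := ends_exists_mem G e
      exact ⟨(w, w), hw, hw, fun h => absurd h he⟩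
  choose sel hsel1 hsel2 hsel3 using hsel
  set ch : E → V := fun e => if e ∈ K then (sel e).1 else (sel e).2 with hchdef
  have hch_mem : ∀ e, ch e ∈ G.ends e := by
    intro e
    by_cases he : e ∈ K
    · simpa [hchdef, he] using hsel1 e
    · simpa [hchdef, he] using hsel2 e
  set T : Finset E := (TS ∪ TC) ∪ {e₀} with hTdef
  have hTSnotC : ∀ e ∈ TS, e ∉ TC := fun e h1 h2 =>
    Finset.disjoint_left.mp (disj_inF_compl G S) (hTSsub h1) (hTCsub h2)
  have he₀TS : e₀ ∉ TS := fun h => Finset.disjoint_left.mp (disj_inF_cut G S) (hTSsub h) he₀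
  have he₀TC : e₀ ∉ TC := fun h => Finset.disjoint_left.mp (disj_inFc_cut G S) (hTCsub h) he₀
  have hTcard : T.card + 1 = Fintype.card V := by
    have h1 : T.card = (TS ∪ TC).card + 1 := by
      rw [hTdef, Finset.card_union_of_disjoint (by
        simp [Finset.disjoint_singleton_right, he₀TS, he₀TC])]
      simp
    have h2 : (TS ∪ TC).card = TS.card + TC.card :=
      Finset.card_union_of_disjoint (Finset.disjoint_left.mpr hTSnotC)
    have h3 := Finset.card_add_card_compl S
    omega
  have hres : ∀ (T' : Finset E) (A : Finset V), T' ⊆ G.inF A →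
      (∀ B', B'.Nonempty → (T' ∩ G.inF B').card + 1 ≤ B'.card) →
      ∀ B : Finset V, (T' ∩ G.inF B).card + 1 ≤ (B ∩ A).card ∨
        ((B ∩ A).card = 0 ∧ (T' ∩ G.inF B).card = 0) := by
    intro T' A hsub hfor B
    have heq : T' ∩ G.inF B = T' ∩ G.inF (B ∩ A) := by
      ext x
      constructor
      · intro hx
        obtain ⟨hx1, hx2⟩ := Finset.mem_inter.mp hx
        exact Finset.mem_inter.mpr ⟨hx1, mem_inF.mpr fun w hw =>
          Finset.mem_inter.mpr ⟨mem_inF.mp hx2 w hw, mem_inF.mp (hsub hx1) w hw⟩⟩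
      · intro hx
        obtain ⟨hx1, hx2⟩ := Finset.mem_inter.mp hx
        exact Finset.mem_inter.mpr ⟨hx1, mem_inF.mpr fun w hw =>
          (Finset.mem_inter.mp (mem_inF.mp hx2 w hw)).1⟩
    rcases (B ∩ A).eq_empty_or_nonempty with h | h
    · right
      refine ⟨by simp [h], ?_⟩
      rw [heq, h, Finset.card_eq_zero, Finset.eq_empty_iff_forall_notMem]
      intro x hx
      obtain ⟨w, hw⟩ := ends_exists_mem G x
      exact Finset.notMem_empty w (mem_inF.mp (Finset.mem_inter.mp hx).2 w hw)
    · left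
      rw [heq]
      exact hfor (B ∩ A) h
  have hforestT : ∀ B : Finset V, B.Nonempty → (T ∩ G.inF B).card + 1 ≤ B.card := by
    intro B hB
    have hxy : (B ∩ S).card + (B ∩ Sᶜ).card = B.card := by
      have hbs : B ∩ Sᶜ = B \ S := by
        ext w; simp [Finset.mem_sdiff, Finset.mem_compl]
      rw [hbs]
      exact Finset.card_inter_add_card_sdiff B S
    have ha' := hres TS S hTSsub hTSforest B
    have hb' := hres TC Sᶜ hTCsub hTCforest B
    have hc1 : ({e₀} ∩ G.inF B).card ≤ 1 := by
      calc ({e₀} ∩ G.inF B).card ≤ ({e₀} : Finset E).card :=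
            Finset.card_le_card Finset.inter_subset_left
        _ = 1 := Finset.card_singleton e₀
    have hc2 : (B ∩ S).card = 0 → ({e₀} ∩ G.inF B).card = 0 := by
      intro h
      rw [Finset.card_eq_zero] at h ⊢
      rw [Finset.eq_empty_iff_forall_notMem]
      intro x hx
      obtain ⟨hx1, hx2⟩ := Finset.mem_inter.mp hx
      rw [Finset.mem_singleton] at hx1
      subst hx1
      have hu : u₀ ∈ B := mem_inF.mp hx2 u₀ hu₀e
      exact Finset.notMem_empty u₀ (h ▸ Finset.mem_inter.mpr ⟨hu, hu₀S⟩)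
    have hc3 : (B ∩ Sᶜ).card = 0 → ({e₀} ∩ G.inF B).card = 0 := by
      intro h
      rw [Finset.card_eq_zero] at h ⊢
      rw [Finset.eq_empty_iff_forall_notMem]
      intro x hx
      obtain ⟨hx1, hx2⟩ := Finset.mem_inter.mp hx
      rw [Finset.mem_singleton] at hx1
      subst hx1
      have hv : v₀ ∈ B := mem_inF.mp hx2 v₀ hv₀e
      exact Finset.notMem_empty v₀
        (h ▸ Finset.mem_inter.mpr ⟨hv, Finset.mem_compl.mpr hv₀S⟩)
    have hsplit : (T ∩ G.inF B).card ≤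
        (TS ∩ G.inF B).card + (TC ∩ G.inF B).card + ({e₀} ∩ G.inF B).card := by
      have hTeq : T ∩ G.inF B = (TS ∩ G.inF B ∪ TC ∩ G.inF B) ∪ ({e₀} ∩ G.inF B) := by
        rw [hTdef, Finset.union_inter_distrib_right, Finset.union_inter_distrib_right]
      rw [hTeq]
      have hu1 := Finset.card_union_le (TS ∩ G.inF B ∪ TC ∩ G.inF B) ({e₀} ∩ G.inF B)
      have hu2 := Finset.card_union_le (TS ∩ G.inF B) (TC ∩ G.inF B)
      omega
    have hBpos := Finset.card_pos.mpr hB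
    omega
  set D : V → ℤ := fun v => (((Finset.univ.filter fun e => e ∉ T ∧ ch e = v)).card : ℤ)
    with hDdef
  have hsumD : ∀ A : Finset V, ∑ i ∈ A, D i =
      (((Finset.univ.filter fun e => e ∉ T ∧ ch e ∈ A)).card : ℤ) := by
    intro A
    rw [Finset.card_eq_sum_card_fiberwise (f := ch) (t := A)
      (fun e he => (Finset.mem_filter.mp he).2.2)]
    push_cast
    refine Finset.sum_congr rfl fun v hv => ?_
    have hflt : (Finset.univ.filter fun e => e ∉ T ∧ ch e = v) =
        ((Finset.univ.filter fun e => e ∉ T ∧ ch e ∈ A).filter fun e => ch e = v) := by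
      rw [Finset.filter_filter]
      refine Finset.filter_congr fun e _ => ?_
      constructor
      · rintro ⟨h1, h2⟩; exact ⟨⟨h1, h2 ▸ hv⟩, h2⟩
      · rintro ⟨⟨h1, _⟩, h2⟩; exact ⟨h1, h2⟩
    simp only [hDdef]
    rw [hflt]
  have hdeg : ∑ v, D v = G.genus := by
    have h0 : (Finset.univ.filter fun e => e ∉ T ∧ ch e ∈ (Finset.univ : Finset V)) = Tᶜ := by
      ext e; simp [Finset.mem_compl]
    have hs := hsumD Finset.univ
    rw [h0] at hs
    rw [hs, Finset.card_compl]
    have hle := Finset.card_le_univ T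
    simp only [genus]
    omega
  have hWS : (Finset.univ.filter fun e => e ∉ T ∧ ch e ∈ S) = (G.inF S \ TS) ∪ K := by
    ext e
    simp only [Finset.mem_filter, Finset.mem_univ, true_and, Finset.mem_union, Finset.mem_sdiff]
    constructor
    · rintro ⟨heT, hchS⟩
      rcases edge_trichotomy G S e with h | h | h
      · left
        refine ⟨h, fun hts => heT ?_⟩
        rw [hTdef]
        exact Finset.mem_union_left _ (Finset.mem_union_left _ hts)
      · exfalso
        exact (Finset.mem_compl.mp (mem_inF.mp h _ (hch_mem e))) hchS
      · by_cases heK : e ∈ K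
        · right; exact heK
        · exfalso
          have hce : ch e = (sel e).2 := by simp [hchdef, heK]
          exact (hsel3 e h).2 (hce ▸ hchS)
    · rintro (⟨hin, hts⟩ | heK)
      · refine ⟨fun heT => ?_, mem_inF.mp hin _ (hch_mem e)⟩
        rw [hTdef] at heT
        rcases Finset.mem_union.mp heT with h | h
        · rcases Finset.mem_union.mp h with h' | h'
          · exact hts h'
          · exact Finset.disjoint_left.mp (disj_inF_compl G S) hin (hTCsub h')
        · rw [Finset.mem_singleton] at h
          subst h
          exact Finset.disjoint_left.mp (disj_inF_cut G S) hin he₀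
      · have hecut : e ∈ G.cutF S := hKcut heK
        constructor
        · intro heT
          rw [hTdef] at heT
          rcases Finset.mem_union.mp heT with h | h
          · rcases Finset.mem_union.mp h with h' | h'
            · exact Finset.disjoint_left.mp (disj_inF_cut G S) (hTSsub h') hecut
            · exact Finset.disjoint_left.mp (disj_inFc_cut G S) (hTCsub h') hecut
          · rw [Finset.mem_singleton] at h
            exact he₀K (h ▸ heK)
        · have hce : ch e = (sel e).1 := by simp [hchdef, heK]
          rw [hce]
          exact (hsel3 e hecut).1
  have hdisjWS : Disjoint (G.inF S \ TS) K :=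
    Finset.disjoint_left.mpr fun e he hK =>
      Finset.disjoint_left.mp (disj_inF_cut G S) (Finset.mem_sdiff.mp he).1 (hKcut hK)
  have hsumS : ∑ i ∈ S, D i = G.inducedGenus S + k := by
    rw [hsumD S, hWS, Finset.card_union_of_disjoint hdisjWS, Finset.card_sdiff_of_subset hTSsub, hKcard]
    simp only [inducedGenus, ncard_insideEdges]
    have h1 : TS.card ≤ (G.inF S).card := Finset.card_le_card hTSsub
    omega
  refine ⟨D, ⟨fun v => by simp only [hDdef]; exact Int.natCast_nonneg _, hdeg, ?_⟩, hsumS⟩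
  intro S' F hF hFconn
  have hS'ne : S'.Nonempty := by
    obtain ⟨⟨w, hw⟩⟩ := hFconn.nonempty
    exact ⟨w, by simpa using hw⟩
  have hFfin : F.Finite := Set.toFinite F
  have hFFsub : ∀ e ∈ hFfin.toFinset, e ∈ G.inF S' := fun e he =>
    mem_inF.mpr (hF e (hFfin.mem_toFinset.mp he))
  have hncard : F.ncard = hFfin.toFinset.card := by
    rw [← Set.ncard_coe_finset, hFfin.coe_toFinset]
  have hA : (hFfin.toFinset ∩ T).card + 1 ≤ S'.card := by
    have h1 : hFfin.toFinset ∩ T ⊆ T ∩ G.inF S' := by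
      intro e he
      obtain ⟨he1, he2⟩ := Finset.mem_inter.mp he
      exact Finset.mem_inter.mpr ⟨he2, hFFsub e he1⟩
    have h2 := hforestT S' hS'ne
    have h3 := Finset.card_le_card h1
    omega
  have hB : hFfin.toFinset \ T ⊆ Finset.univ.filter fun e => e ∉ T ∧ ch e ∈ S' := by
    intro e he
    obtain ⟨h1, h2⟩ := Finset.mem_sdiff.mp he
    exact Finset.mem_filter.mpr ⟨Finset.mem_univ e, h2, mem_inF.mp (hFFsub e h1) _ (hch_mem e)⟩
  have hsplitF := Finset.card_inter_add_card_sdiff hFfin.toFinset T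
  have hBc := Finset.card_le_card hB
  rw [hsumD S']
  omega

end Multigraph

/-- For `S` with `∂(S)` a bond, every integer `v` in
`[g(G[S]), g(G) − g(G[S̄])]` is attained as `Σ_{i∈S} D(i)` for some break
divisor `D`; in particular the linear functional `x_S` attains exactly
`d(S) = g(G) − g(G[S]) − g(G[S̄]) + 1` distinct values on break divisors. -/
theorem breakDivisor_cut_values {V E : Type} [Fintype V] [Fintype E]
    [DecidableEq V] (G : Multigraph V E) (hG : G.simple.Connected)
    (S : Finset V) (hS : S.Nonempty) (hSne : S ≠ Finset.univ)
    (hconnS : (G.simple.induce (S : Set V)).Connected)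
    (hconnSc : (G.simple.induce ((Sᶜ : Finset V) : Set V)).Connected) :
    (∀ v : ℤ, G.inducedGenus S ≤ v → v ≤ G.genus - G.inducedGenus Sᶜ →
      ∃ D : V → ℤ, G.IsBreakDivisor D ∧ ∑ i ∈ S, D i = v) ∧
    {v : ℤ | ∃ D : V → ℤ, G.IsBreakDivisor D ∧ ∑ i ∈ S, D i = v}.ncard =
      (G.cutEdges S).ncard ∧
    ((G.cutEdges S).ncard : ℤ) =
      G.genus - G.inducedGenus S - G.inducedGenus Sᶜ + 1 := by
  classical
  have hcut : (G.cutEdges S).ncard = (G.cutF S).card := Multigraph.ncard_cutEdges G S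
  have hScne : (Sᶜ : Finset V).Nonempty := by
    rw [Finset.nonempty_iff_ne_empty]; simpa using hSne
  have hpart3 : ((G.cutF S).card : ℤ) =
      G.genus - G.inducedGenus S - G.inducedGenus Sᶜ + 1 := by
    have h1 := Multigraph.edges_card_partition G S
    have h2 := Finset.card_add_card_compl S
    simp only [Multigraph.genus, Multigraph.inducedGenus, Multigraph.ncard_insideEdges]
    omega
  obtain ⟨a, ha⟩ := hS
  obtain ⟨b0, hb0⟩ := hScne
  obtain ⟨e₀, u₀, v₀, hu₀e, hv₀e, hu₀S, hv₀S⟩ :=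
    Multigraph.exists_cut_edge G hG S ha (Finset.mem_compl.mp hb0)
  have hd1 : 1 ≤ (G.cutF S).card := Finset.card_pos.mpr
    ⟨e₀, Multigraph.mem_cutF.mpr ⟨⟨u₀, hu₀e, hu₀S⟩, ⟨v₀, hv₀e, hv₀S⟩⟩⟩
  have hpart1 : ∀ v : ℤ, G.inducedGenus S ≤ v → v ≤ G.genus - G.inducedGenus Sᶜ →
      ∃ D : V → ℤ, G.IsBreakDivisor D ∧ ∑ i ∈ S, D i = v := by
    intro v hv1 hv2
    have hk0 : ((v - G.inducedGenus S).toNat : ℤ) = v - G.inducedGenus S :=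
      Int.toNat_of_nonneg (by omega)
    have hk : (v - G.inducedGenus S).toNat + 1 ≤ (G.cutF S).card := by omega
    obtain ⟨D, hD, hDs⟩ :=
      Multigraph.exists_breakDivisor_k G hG S ⟨a, ha⟩ hSne hconnS hconnSc _ hk
    exact ⟨D, hD, by rw [hDs]; omega⟩
  refine ⟨hpart1, ?_, by rw [hcut]; exact hpart3⟩
  have hlow : ∀ D : V → ℤ, G.IsBreakDivisor D → G.inducedGenus S ≤ ∑ i ∈ S, D i := by
    intro D hD
    have h := hD.2.2 S (G.insideEdges S) (fun e he => he)
      (by rw [Multigraph.subSimple_induce_eq]; exact hconnS)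
    simpa [Multigraph.inducedGenus] using h
  have hhigh : ∀ D : V → ℤ, G.IsBreakDivisor D →
      ∑ i ∈ S, D i ≤ G.genus - G.inducedGenus Sᶜ := by
    intro D hD
    have h1 := hD.2.2 Sᶜ (G.insideEdges Sᶜ) (fun e he => he)
      (by rw [Multigraph.subSimple_induce_eq]; exact hconnSc)
    have h2 : ∑ i ∈ S, D i + ∑ i ∈ Sᶜ, D i = G.genus := by
      rw [Finset.sum_add_sum_compl]; exact hD.2.1
    have h3 : G.inducedGenus Sᶜ ≤ ∑ i ∈ Sᶜ, D i := by
      simpa [Multigraph.inducedGenus] using h1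
    omega
  have hset : {v : ℤ | ∃ D : V → ℤ, G.IsBreakDivisor D ∧ ∑ i ∈ S, D i = v} =
      Set.Icc (G.inducedGenus S) (G.genus - G.inducedGenus Sᶜ) := by
    ext v
    simp only [Set.mem_setOf_eq, Set.mem_Icc]
    constructor
    · rintro ⟨D, hD, rfl⟩
      exact ⟨hlow D hD, hhigh D hD⟩
    · rintro ⟨h1, h2⟩
      exact hpart1 v h1 h2
  rw [hset, ← Finset.coe_Icc, Set.ncard_coe_finset, Int.card_Icc, hcut]
  omega
end

section
/- Let G be a connected graph with a spanning tree T, and for each edge e ∈ E(G)∖E(T) choose one of its two endpoints and place a chip there. Then the divisor D assigning to each vertex its number of chips is a break divisor on G. -/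
private lemma sym2_eq_of_mem {V : Type} {z : Sym2 V} {x y : V} (hxy : x ≠ y)
    (hx : x ∈ z) (hy : y ∈ z) : z = s(x, y) := by
  induction z using Sym2.inductionOn with
  | hf a b =>
    rw [Sym2.mem_iff] at hx hy
    rcases hx with rfl | rfl <;> rcases hy with rfl | rfl <;>
      simp_all [Sym2.eq_swap]

private lemma exists_parent {V : Type} {H : SimpleGraph V} (hH : H.Connected) {r v : V}
    (hv : v ≠ r) : ∃ u, H.Adj v u ∧ H.dist u r + 1 = H.dist v r := by
  obtain ⟨p, hp⟩ := (hH v r).exists_walk_length_eq_dist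
  have hnn : ¬ p.Nil := SimpleGraph.Walk.not_nil_of_ne hv
  refine ⟨p.getVert 1, p.adj_snd hnn, ?_⟩
  have h1 : H.dist (p.getVert 1) r ≤ p.tail.length := SimpleGraph.dist_le _
  have h2 : p.tail.length + 1 = p.length := SimpleGraph.Walk.length_tail_add_one hnn
  obtain ⟨q, hq⟩ := (hH (p.getVert 1) r).exists_walk_length_eq_dist
  have h3 : H.dist v r ≤ H.dist (p.getVert 1) r + 1 := by
    have := SimpleGraph.dist_le (SimpleGraph.Walk.cons (p.adj_snd hnn) q)
    simpa [hq] using this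
  omega

/-- A connected simple graph on a finite vertex type has at least
`|V| - 1` edges. -/
private lemma connected_card_le {V : Type} [Fintype V] {H : SimpleGraph V}
    (hH : H.Connected) : Fintype.card V ≤ H.edgeSet.ncard + 1 := by
  classical
  obtain ⟨r⟩ := hH.nonempty
  have key : ∀ v : {v : V // v ≠ r}, ∃ u, H.Adj v.1 u ∧ H.dist u r + 1 = H.dist v.1 r :=
    fun v => exists_parent hH v.2
  choose u hadj hdist using key
  have hinj : Function.Injective
      (fun v : {v : V // v ≠ r} =>
        (⟨s(v.1, u v), (H.mem_edgeSet).2 (hadj v)⟩ : H.edgeSet)) := by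
    intro a b hab
    simp only [Subtype.mk.injEq, Sym2.eq, Sym2.rel_iff', Prod.mk.injEq,
      Prod.swap_prod_mk] at hab
    rcases hab with ⟨h1, h2⟩ | ⟨h1, h2⟩
    · exact Subtype.ext h1
    · exfalso
      have ha := hdist a
      have hb := hdist b
      rw [h2] at ha
      rw [h1] at ha
      omega
  have hle : Nat.card {v : V // v ≠ r} ≤ Nat.card H.edgeSet :=
    Nat.card_le_card_of_injective _ hinj
  have h1 : Nat.card {v : V // v ≠ r} = Fintype.card V - 1 := by
    simp [Nat.card_eq_fintype_card, Fintype.card_subtype_compl, Fintype.card_subtype_eq]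
  have h2 : H.edgeSet.ncard = Nat.card H.edgeSet := rfl
  haveI : Nonempty V := ⟨r⟩
  have hpos : 1 ≤ Fintype.card V := Fintype.card_pos
  omega

/-- Given a spanning tree `T` of a connected multigraph `G` and, for each
non-tree edge, a choice of one of its endpoints ("placing a chip"), the divisor
counting chips at each vertex is a break divisor. -/
theorem chips_give_break_divisor {V E : Type} [Fintype V] [Fintype E]
    (G : Multigraph V E) (hG : G.simple.Connected)
    (T : Set E)
    (hTconn : (G.subSimple T).Connected)
    (hTcard : T.ncard = Fintype.card V - 1)
    (c : E → V) (hc : ∀ e ∉ T, c e ∈ G.ends e) :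
    G.IsBreakDivisor (fun v => ({e | e ∉ T ∧ c e = v}.ncard : ℤ)) := by
  classical
  obtain ⟨r0⟩ := hG.nonempty
  haveI : Nonempty V := ⟨r0⟩
  have hVpos : 1 ≤ Fintype.card V := Fintype.card_pos
  have hTle : T.ncard ≤ Fintype.card E := by
    have := Set.ncard_le_ncard (Set.subset_univ T) Set.finite_univ
    simpa [Set.ncard_univ, Nat.card_eq_fintype_card] using this
  have hTf : (Finset.univ.filter fun e => e ∈ T).card = T.ncard := by
    rw [← Set.ncard_coe_finset]
    congr 1
    ext e; simp
  have hfib : ∀ v : V, ({e | e ∉ T ∧ c e = v}).ncard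
      = (Finset.univ.filter fun e => e ∉ T ∧ c e = v).card := by
    intro v
    have : {e | e ∉ T ∧ c e = v} = ↑(Finset.univ.filter fun e => e ∉ T ∧ c e = v) := by
      ext e; simp
    rw [this, Set.ncard_coe_finset]
  refine ⟨fun v => Int.natCast_nonneg _, ?_, ?_⟩
  · -- degree is the genus
    have hsum : (Finset.univ.filter fun e => e ∉ T).card
        = ∑ v, (Finset.univ.filter fun e => e ∉ T ∧ c e = v).card := by
      rw [Finset.card_eq_sum_card_fiberwise (f := c) (t := Finset.univ)
        (fun e _ => Finset.mem_univ (c e))]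
      refine Finset.sum_congr rfl fun v _ => ?_
      rw [Finset.filter_filter]
    have hparts := Finset.card_filter_add_card_filter_not
      (s := (Finset.univ : Finset E)) (p := fun e => e ∈ T)
    rw [Finset.card_univ] at hparts
    have hcast : (∑ v, (({e | e ∉ T ∧ c e = v}).ncard : ℤ))
        = ((Finset.univ.filter fun e => e ∉ T).card : ℤ) := by
      rw [hsum]
      push_cast
      refine Finset.sum_congr rfl fun v _ => ?_
      rw [hfib v]
    rw [hcast]
    unfold Multigraph.genus
    omega
  · -- the inequality for connected subgraphs
    intro S F hF hconn
    have hSne : S.Nonempty := by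
      obtain ⟨⟨v, hv⟩⟩ := hconn.nonempty
      exact ⟨v, hv⟩
    -- contract S to a point
    set π : V → Option {v : V // v ∉ S} :=
      fun v => if h : v ∈ S then none else some ⟨v, h⟩ with hπ
    set ES : Set (Sym2 (Option {v : V // v ∉ S})) :=
      (fun e => (G.ends e).map π) '' (T \ G.insideEdges S) with hES
    set H' := SimpleGraph.fromEdgeSet ES with hH'
    have hstep : ∀ {x y : V}, (G.subSimple T).Walk x y → H'.Reachable (π x) (π y) := by
      intro x y p
      induction p with
      | nil => exact SimpleGraph.Reachable.refl _
      | @cons a b y h q ih =>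
        by_cases hab : π a = π b
        · rw [hab]; exact ih
        · refine (SimpleGraph.Adj.reachable ?_).trans ih
          obtain ⟨hne, e, heT, hae, hbe⟩ := h
          have hnotin : e ∉ G.insideEdges S := by
            intro hin
            have ha' : a ∈ S := hin a hae
            have hb' : b ∈ S := hin b hbe
            apply hab
            simp [hπ, ha', hb']
          have hends : G.ends e = s(a, b) := sym2_eq_of_mem hne hae hbe
          have hmem : s(π a, π b) ∈ ES := by
            rw [hES]
            refine ⟨e, ⟨heT, hnotin⟩, ?_⟩
            show Sym2.map π (G.ends e) = s(π a, π b)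
            rw [hends, Sym2.map_pair_eq]
          rw [hH', SimpleGraph.fromEdgeSet_adj]
          exact ⟨hmem, hab⟩
    have hH'conn : H'.Connected := by
      have hsurj : ∀ a : Option {v : V // v ∉ S}, ∃ x : V, π x = a := by
        rintro (_ | ⟨v, hv⟩)
        · obtain ⟨s, hs⟩ := hSne
          exact ⟨s, by simp [hπ, hs]⟩
        · exact ⟨v, by simp [hπ, hv]⟩
      refine SimpleGraph.Connected.mk fun a b => ?_
      obtain ⟨x, rfl⟩ := hsurj a
      obtain ⟨y, rfl⟩ := hsurj b
      obtain ⟨p⟩ := hTconn.preconnected x y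
      exact hstep p
    have hcard := connected_card_le hH'conn
    have hcardV' : Fintype.card (Option {v : V // v ∉ S})
        = (Fintype.card V - S.card) + 1 := by
      rw [Fintype.card_option, Fintype.card_subtype_compl]
      congr 2
      simp [Fintype.card_subtype]
    have hE' : H'.edgeSet.ncard ≤ (T \ G.insideEdges S).ncard := by
      calc H'.edgeSet.ncard ≤ ES.ncard := by
            refine Set.ncard_le_ncard ?_ (Set.toFinite _)
            rw [hH', SimpleGraph.edgeSet_fromEdgeSet]
            exact Set.diff_subset
        _ ≤ (T \ G.insideEdges S).ncard := Set.ncard_image_le (Set.toFinite _)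
    have hFT : F ∩ T ⊆ G.insideEdges S := fun e he v hv => hF e he.1 v hv
    have h5 : (T \ G.insideEdges S).ncard ≤ T.ncard - (F ∩ T).ncard := by
      calc (T \ G.insideEdges S).ncard ≤ (T \ (F ∩ T)).ncard := by
            refine Set.ncard_le_ncard (fun e he => ⟨he.1, fun hin => he.2 (hFT hin)⟩)
              (Set.toFinite _)
        _ = T.ncard - (F ∩ T).ncard := Set.ncard_diff Set.inter_subset_right
    have hScard : S.card ≤ Fintype.card V := S.card_le_univ
    have hSpos : 1 ≤ S.card := hSne.card_pos
    have hFTle : (F ∩ T).ncard ≤ T.ncard :=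
      Set.ncard_le_ncard Set.inter_subset_right (Set.toFinite _)
    have hkey : (F ∩ T).ncard + 1 ≤ S.card := by omega
    -- chips in S dominate |F \ T|
    have hsfib := Finset.card_eq_sum_card_fiberwise
      (s := Finset.univ.filter fun e => e ∉ T ∧ c e ∈ S) (t := S) (f := c)
      (fun e he => (Finset.mem_filter.1 he).2.2)
    have hfib2 : ∀ v ∈ S,
        ((Finset.univ.filter fun e => e ∉ T ∧ c e ∈ S).filter fun e => c e = v)
          = Finset.univ.filter fun e => e ∉ T ∧ c e = v := by
      intro v hv
      rw [Finset.filter_filter]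
      ext e
      simp only [Finset.mem_filter, Finset.mem_univ, true_and]
      constructor
      · rintro ⟨⟨h1, _⟩, h3⟩; exact ⟨h1, h3⟩
      · rintro ⟨h1, rfl⟩; exact ⟨⟨h1, hv⟩, rfl⟩
    have hsum2 : (F \ T).ncard ≤ (Finset.univ.filter fun e => e ∉ T ∧ c e ∈ S).card := by
      have hFS : F \ T ⊆ ↑(Finset.univ.filter fun e => e ∉ T ∧ c e ∈ S) := by
        intro e he
        simp only [Finset.coe_filter, Set.mem_setOf_eq, Finset.mem_univ, true_and]
        exact ⟨he.2, hF e he.1 (c e) (hc e he.2)⟩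
      have := Set.ncard_le_ncard hFS (Set.toFinite _)
      rwa [Set.ncard_coe_finset] at this
    have hsum3 : ((F \ T).ncard : ℤ) ≤ ∑ v ∈ S, (({e | e ∉ T ∧ c e = v}).ncard : ℤ) := by
      have : (∑ v ∈ S, (({e | e ∉ T ∧ c e = v}).ncard : ℤ))
          = ((Finset.univ.filter fun e => e ∉ T ∧ c e ∈ S).card : ℤ) := by
        rw [hsfib]
        push_cast
        refine Finset.sum_congr rfl fun v hv => ?_
        rw [hfib v, hfib2 v hv]
      rw [this]
      exact_mod_cast hsum2
    have hFcard : F.ncard = (F ∩ T).ncard + (F \ T).ncard :=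
      (Set.ncard_inter_add_ncard_diff_eq_ncard F T).symm
    have hkey' : ((F ∩ T).ncard : ℤ) + 1 ≤ (S.card : ℤ) := by exact_mod_cast hkey
    have hFcard' : (F.ncard : ℤ) = ((F ∩ T).ncard : ℤ) + ((F \ T).ncard : ℤ) := by
      exact_mod_cast hFcard
    linarith
end

section
/- Let Y ⊂ ℚ^n be a finite set of points stable under the action of a finite subgroup 𝒢 of GL_n(ℚ). Let I(Y) be the vanishing ideal of Y in ℚ[x_1,…,x_n] and let T(Y) be the ideal generated by the top-degree homogeneous components τ(f) of all nonzero f ∈ I(Y). Then ℚ[x_1,…,x_n]/T(Y) is isomorphic to the permutation module ℚ[Y] as an (ungraded) 𝒢-module; in particular dim_ℚ(ℚ[x_1,…,x_n]/T(Y)) = |Y|. -/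
open MvPolynomial

/-- The vanishing ideal `I(Y)` of a point set `Y ⊆ ℚⁿ`. -/
noncomputable def vanishingIdeal (n : ℕ) (Y : Set (Fin n → ℚ)) :
    Ideal (MvPolynomial (Fin n) ℚ) where
  carrier := {f | ∀ y ∈ Y, eval y f = 0}
  add_mem' := by
    intro a b ha hb y hy
    simp [map_add, ha y hy, hb y hy]
  zero_mem' := by intro y hy; simp
  smul_mem' := by
    intro c a ha y hy
    simp [smul_eq_mul, map_mul, ha y hy]

/-- The orbit harmonics ideal `T(Y)`, generated by top-degree homogeneous
components `τ(f)` of nonzero elements `f ∈ I(Y)`. -/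
noncomputable def topDegreeIdeal (n : ℕ) (Y : Set (Fin n → ℚ)) :
    Ideal (MvPolynomial (Fin n) ℚ) :=
  Ideal.span {g | ∃ f ∈ vanishingIdeal n Y, f ≠ 0 ∧
    g = homogeneousComponent f.totalDegree f}

/-- Linear substitution action of a matrix `M` on polynomials:
`x_i ↦ Σ_j M_{ij} x_j`, so that `(polyAct M f)(y) = f(My)`. -/
noncomputable def polyAct (n : ℕ) (M : Matrix (Fin n) (Fin n) ℚ)
    (f : MvPolynomial (Fin n) ℚ) : MvPolynomial (Fin n) ℚ :=
  aeval (fun i => ∑ j, C (M i j) * X j) f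

set_option linter.unusedSectionVars false
set_option maxHeartbeats 1000000

namespace OrbitHarmonics

variable (n : ℕ) (Y : Set (Fin n → ℚ)) [Fintype ↥Y]

/-- Evaluation on `Y` as a linear map. -/
noncomputable def evL : MvPolynomial (Fin n) ℚ →ₗ[ℚ] (↥Y → ℚ) where
  toFun f := fun y => eval (y : Fin n → ℚ) f
  map_add' := by intros a b; funext y; simp
  map_smul' := by intros a b; funext y; simp [smul_eq_mul]

@[simp] lemma evL_apply (f : MvPolynomial (Fin n) ℚ) (y : ↥Y) :
    evL n Y f y = eval (y : Fin n → ℚ) f := rfl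

/-- The standard positive-definite bilinear form on `↥Y → ℚ`. -/
noncomputable def Bf : LinearMap.BilinForm ℚ (↥Y → ℚ) :=
  LinearMap.mk₂ ℚ (fun v w => ∑ y, v y * w y)
    (by intros; simp [add_mul, Finset.sum_add_distrib])
    (by intros; simp [Finset.mul_sum, smul_eq_mul, mul_assoc])
    (by intros; simp [mul_add, Finset.sum_add_distrib])
    (by intros m c v; simp only [Pi.smul_apply, smul_eq_mul, Finset.mul_sum, mul_assoc,
      mul_left_comm])

@[simp] lemma Bf_apply (v w : ↥Y → ℚ) : Bf n Y v w = ∑ y, v y * w y := rfl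

lemma Bf_refl : (Bf n Y).IsRefl := by
  intro v w h
  simpa [mul_comm] using h

lemma Bf_self_eq_zero {v : ↥Y → ℚ} (h : Bf n Y v v = 0) : v = 0 := by
  funext y
  have h2 : ∀ z ∈ (Finset.univ : Finset ↥Y), 0 ≤ v z * v z := fun z _ => mul_self_nonneg _
  have := (Finset.sum_eq_zero_iff_of_nonneg h2).mp h y (Finset.mem_univ y)
  have := mul_self_eq_zero.mp this
  simpa using this

lemma isCompl_orth (W : Submodule ℚ (↥Y → ℚ)) :
    IsCompl W ((Bf n Y).orthogonal W) := by
  apply LinearMap.BilinForm.isCompl_orthogonal_of_restrict_nondegenerate (Bf_refl n Y)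
  constructor <;>
  · intro x hx
    have := hx x
    rw [LinearMap.BilinForm.restrict_apply] at this
    exact Subtype.ext (Bf_self_eq_zero n Y this)

/-- Orthogonal projection onto `W`. -/
noncomputable def prj (W : Submodule ℚ (↥Y → ℚ)) : (↥Y → ℚ) →ₗ[ℚ] (↥Y → ℚ) :=
  W.subtype ∘ₗ Submodule.linearProjOfIsCompl W ((Bf n Y).orthogonal W) (isCompl_orth n Y W)

lemma prj_mem (W : Submodule ℚ (↥Y → ℚ)) (v : ↥Y → ℚ) : prj n Y W v ∈ W :=
  (Submodule.linearProjOfIsCompl W _ (isCompl_orth n Y W) v).2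

lemma sub_prj_mem (W : Submodule ℚ (↥Y → ℚ)) (v : ↥Y → ℚ) :
    v - prj n Y W v ∈ (Bf n Y).orthogonal W := by
  have h := Submodule.projection_add_projection_eq_self (isCompl_orth n Y W) v
  have : v - prj n Y W v =
      (((Bf n Y).orthogonal W).linearProjOfIsCompl W (isCompl_orth n Y W).symm v : ↥Y → ℚ) := by
    exact (Submodule.projection_eq_self_sub_projection (isCompl_orth n Y W) v).symm
  rw [this]
  exact Subtype.mem _

lemma prj_of_mem (W : Submodule ℚ (↥Y → ℚ)) {v : ↥Y → ℚ} (hv : v ∈ W) : prj n Y W v = v := by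
  have := Submodule.linearProjOfIsCompl_apply_left (isCompl_orth n Y W) ⟨v, hv⟩
  exact congrArg Subtype.val this

lemma prj_of_mem_orth (W : Submodule ℚ (↥Y → ℚ)) {v : ↥Y → ℚ}
    (hv : v ∈ (Bf n Y).orthogonal W) : prj n Y W v = 0 := by
  have := Submodule.projectionOnto_apply_of_mem_right (isCompl_orth n Y W) hv
  simp [prj, Submodule.linearProjOfIsCompl, this]

lemma eq_zero_of_mem_inf_orth (W : Submodule ℚ (↥Y → ℚ)) {v : ↥Y → ℚ}
    (h1 : v ∈ W) (h2 : v ∈ (Bf n Y).orthogonal W) : v = 0 := by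
  exact Bf_self_eq_zero n Y (h2 v h1)

lemma prj_unique (W : Submodule ℚ (↥Y → ℚ)) {a b : ↥Y → ℚ}
    (ha : a ∈ W) (hb : b ∈ (Bf n Y).orthogonal W) : prj n Y W (a + b) = a := by
  rw [map_add, prj_of_mem n Y W ha, prj_of_mem_orth n Y W hb, add_zero]

/-- Filtration by evaluations of polynomials of total degree at most `d`. -/
noncomputable def Fd (d : ℕ) : Submodule ℚ (↥Y → ℚ) :=
  (restrictTotalDegree (Fin n) ℚ d).map (evL n Y)

/-- `Fb d` is the previous filtration step (`⊥` for `d = 0`). -/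
noncomputable def Fb : ℕ → Submodule ℚ (↥Y → ℚ)
  | 0 => ⊥
  | (d+1) => Fd n Y d

lemma mem_Fd {d : ℕ} {v : ↥Y → ℚ} :
    v ∈ Fd n Y d ↔ ∃ f, f.totalDegree ≤ d ∧ evL n Y f = v := by
  simp [Fd, Submodule.mem_map, mem_restrictTotalDegree]

lemma Fd_mono : Monotone (Fd n Y) := by
  intro a b hab
  apply Submodule.map_mono
  intro f hf
  rw [mem_restrictTotalDegree] at hf ⊢
  omega

lemma Fb_le_Fd (d : ℕ) : Fb n Y d ≤ Fd n Y d := by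
  cases d with
  | zero => exact bot_le
  | succ d => exact Fd_mono n Y (Nat.le_succ d)

lemma Fb_mono : Monotone (Fb n Y) := by
  intro a b hab
  cases a with
  | zero => exact bot_le
  | succ a =>
    cases b with
    | zero => omega
    | succ b => exact Fd_mono n Y (by omega)

lemma evL_eq_zero_of_vanishing {f : MvPolynomial (Fin n) ℚ}
    (hf : f ∈ vanishingIdeal n Y) : evL n Y f = 0 := by
  funext y
  exact hf y y.2

lemma vanishing_of_evL_eq_zero {f : MvPolynomial (Fin n) ℚ}
    (hf : evL n Y f = 0) : f ∈ vanishingIdeal n Y := by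
  intro y hy
  exact congrFun hf ⟨y, hy⟩

/-- (L1): a homogeneous polynomial of degree `d` whose evaluation lies one step
down the filtration belongs to `T(Y)`. -/
lemma mem_T_of_homogeneous {d : ℕ} {f : MvPolynomial (Fin n) ℚ}
    (hf : f.IsHomogeneous d) (h : evL n Y f ∈ Fb n Y d) :
    f ∈ topDegreeIdeal n Y := by
  by_cases hf0 : f = 0
  · simp [hf0]
  obtain ⟨h', hd1, hd2, hev⟩ : ∃ h', homogeneousComponent d h' = 0 ∧
      h'.totalDegree ≤ d ∧ evL n Y h' = evL n Y f := by
    cases d with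
    | zero =>
      refine ⟨0, by simp, by simp, ?_⟩
      have : evL n Y f = 0 := by simpa [Fb] using h
      simp [this]
    | succ d =>
      obtain ⟨h', hh', hev⟩ := (mem_Fd n Y).mp h
      exact ⟨h', homogeneousComponent_eq_zero _ _ (by omega), le_trans hh' (Nat.le_succ d), hev⟩
  set g := f - h' with hg
  have hgI : g ∈ vanishingIdeal n Y := by
    apply vanishing_of_evL_eq_zero
    rw [hg, map_sub, hev, sub_self]
  have hcomp : homogeneousComponent d g = f := by
    rw [hg, map_sub, hd1, sub_zero,
      homogeneousComponent_of_mem ((mem_homogeneousSubmodule d f).mpr hf), if_pos rfl]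
  have hg0 : g ≠ 0 := by
    intro h0
    rw [h0, map_zero] at hcomp
    exact hf0 hcomp.symm
  have hdeg : g.totalDegree = d := by
    apply le_antisymm
    · apply Finset.sup_le
      intro m hm
      rw [MvPolynomial.mem_support_iff] at hm
      by_contra hcon
      push_neg at hcon
      have hcf : MvPolynomial.coeff m f = 0 :=
        MvPolynomial.coeff_eq_zero_of_totalDegree_lt (lt_of_le_of_lt hf.totalDegree_le hcon)
      have hch : MvPolynomial.coeff m h' = 0 :=
        MvPolynomial.coeff_eq_zero_of_totalDegree_lt (lt_of_le_of_lt hd2 hcon)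
      rw [hg] at hm
      simp [MvPolynomial.coeff_sub, hcf, hch] at hm
    · by_contra hcon
      push_neg at hcon
      have := homogeneousComponent_eq_zero _ g hcon
      rw [hcomp] at this
      exact hf0 this
  apply Ideal.subset_span
  exact ⟨g, hgI, hg0, by rw [hdeg, hcomp]⟩

/-- Key multiplicative step: a homogeneous multiple of a top-degree component of
an element of `I(Y)` evaluates into the previous filtration step. -/
lemma evL_mul_tau_mem {g : MvPolynomial (Fin n) ℚ} (hgI : g ∈ vanishingIdeal n Y)
    {q : MvPolynomial (Fin n) ℚ} {e d : ℕ} (hq : q.IsHomogeneous e)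
    (hd : e + g.totalDegree = d) :
    evL n Y (q * homogeneousComponent g.totalDegree g) ∈ Fb n Y d := by
  have hqg : q * g ∈ vanishingIdeal n Y := Ideal.mul_mem_left _ q hgI
  have hev0 : evL n Y (q * g) = 0 := evL_eq_zero_of_vanishing n Y hqg
  have key : evL n Y (q * homogeneousComponent g.totalDegree g)
      = evL n Y (q * (homogeneousComponent g.totalDegree g - g)) := by
    rw [mul_sub, map_sub, hev0, sub_zero]
  rw [key]
  rcases Nat.eq_zero_or_pos g.totalDegree with hDg0 | hDgpos
  · have hg0 : homogeneousComponent g.totalDegree g = g := by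
      have h1 := sum_homogeneousComponent g
      rw [hDg0] at h1 ⊢
      simpa using h1
    rw [hg0, sub_self, mul_zero, map_zero]
    exact Submodule.zero_mem _
  · obtain ⟨d', rfl⟩ : ∃ d', d = d' + 1 := ⟨d - 1, by omega⟩
    show _ ∈ Fd n Y d'
    rw [mem_Fd]
    refine ⟨q * (homogeneousComponent g.totalDegree g - g), ?_, rfl⟩
    calc (q * (homogeneousComponent g.totalDegree g - g)).totalDegree
        ≤ q.totalDegree + (homogeneousComponent g.totalDegree g - g).totalDegree :=
          MvPolynomial.totalDegree_mul _ _
      _ ≤ d' := by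
          have h1 : q.totalDegree ≤ e := hq.totalDegree_le
          have h2 : (homogeneousComponent g.totalDegree g - g).totalDegree
              ≤ g.totalDegree - 1 := by
            apply Finset.sup_le
            intro m hm
            rw [MvPolynomial.mem_support_iff] at hm
            by_contra hcon
            push_neg at hcon
            have hdm : m.degree = m.sum fun _ e => e := by
              simp [Finsupp.degree, Finsupp.sum]
              rfl
            have hle : g.totalDegree ≤ m.sum fun _ e => e := by omega
            rcases eq_or_lt_of_le hle with heq | hlt
            · have hcg : MvPolynomial.coeff m (homogeneousComponent g.totalDegree g)
                  = MvPolynomial.coeff m g := by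
                rw [coeff_homogeneousComponent, if_pos (by omega)]
              simp [MvPolynomial.coeff_sub, hcg] at hm
            · have hsum : g.totalDegree < ∑ i ∈ m.support, m i := by
                have : (m.sum fun _ e => e) = ∑ i ∈ m.support, m i := rfl
                omega
              have hcg : MvPolynomial.coeff m g = 0 :=
                MvPolynomial.coeff_eq_zero_of_totalDegree_lt hsum
              have hcc : MvPolynomial.coeff m (homogeneousComponent g.totalDegree g) = 0 := by
                rw [coeff_homogeneousComponent, if_neg (by omega)]
              simp [MvPolynomial.coeff_sub, hcg, hcc] at hm
          omega

/-- (L2): homogeneous components of elements of `T(Y)` evaluate one step down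
the filtration. -/
lemma evL_homogeneousComponent_mem_Fb {f : MvPolynomial (Fin n) ℚ}
    (hf : f ∈ topDegreeIdeal n Y) (d : ℕ) :
    evL n Y (homogeneousComponent d f) ∈ Fb n Y d := by
  have main : ∀ p : MvPolynomial (Fin n) ℚ, ∀ d : ℕ,
      evL n Y (homogeneousComponent d (p * f)) ∈ Fb n Y d := by
    rw [topDegreeIdeal] at hf
    induction hf using Submodule.span_induction with
    | mem x hx =>
      obtain ⟨g, hgI, hg0, rfl⟩ := hx
      intro p d
      -- expand p into homogeneous components
      have hp : p * homogeneousComponent g.totalDegree g =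
          ∑ e ∈ Finset.range (p.totalDegree + 1),
            homogeneousComponent e p * homogeneousComponent g.totalDegree g := by
        rw [← Finset.sum_mul, sum_homogeneousComponent]
      rw [hp, map_sum, map_sum]
      apply Submodule.sum_mem
      intro e he
      by_cases hed : e + g.totalDegree = d
      · have hmem : homogeneousComponent e p * homogeneousComponent g.totalDegree g
            ∈ homogeneousSubmodule (Fin n) ℚ d := by
          rw [mem_homogeneousSubmodule]
          rw [← hed]
          exact (homogeneousComponent_isHomogeneous e p).mul
            (homogeneousComponent_isHomogeneous g.totalDegree g)
        rw [homogeneousComponent_of_mem hmem, if_pos rfl]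
        exact evL_mul_tau_mem n Y hgI (homogeneousComponent_isHomogeneous e p) hed
      · have hmem : homogeneousComponent e p * homogeneousComponent g.totalDegree g
            ∈ homogeneousSubmodule (Fin n) ℚ (e + g.totalDegree) := by
          rw [mem_homogeneousSubmodule]
          exact (homogeneousComponent_isHomogeneous e p).mul
            (homogeneousComponent_isHomogeneous g.totalDegree g)
        rw [homogeneousComponent_of_mem hmem, if_neg (fun hcon => hed hcon.symm)]
        simp
    | zero => intro p d; simp
    | add x y hx hy ihx ihy =>
      intro p d
      rw [mul_add, map_add, map_add]
      exact Submodule.add_mem _ (ihx p d) (ihy p d)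
    | smul r x hx ihx =>
      intro p d
      have : p * (r • x) = (p * r) * x := by
        rw [smul_eq_mul]; ring
      rw [this]
      exact ihx (p * r) d
  simpa using main 1 d

/-- Indicator polynomials (Lagrange interpolation). -/
lemma exists_indicator (y : ↥Y) :
    ∃ f : MvPolynomial (Fin n) ℚ,
      ∀ z : ↥Y, eval (z : Fin n → ℚ) f = if z = y then 1 else 0 := by
  classical
  have hdiff : ∀ z : {z : ↥Y // z ∈ Finset.univ.erase y},
      ∃ i, ((z : ↥Y) : Fin n → ℚ) i ≠ (y : Fin n → ℚ) i := by
    intro z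
    have hz : (z : ↥Y) ≠ y := (Finset.mem_erase.mp z.2).1
    by_contra hcon; push_neg at hcon
    exact hz (Subtype.ext (funext hcon))
  choose idx hidx using hdiff
  refine ⟨∏ z ∈ (Finset.univ.erase y).attach,
    C ((((y : ↥Y) : Fin n → ℚ) (idx z) - (((z : ↥Y) : Fin n → ℚ)) (idx z))⁻¹) *
      (X (idx z) - C ((((z : ↥Y) : Fin n → ℚ)) (idx z))), ?_⟩
  intro w
  rw [map_prod]
  by_cases hw : w = y
  · subst hw
    rw [if_pos rfl]
    apply Finset.prod_eq_one
    intro z hz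
    simp only [map_mul, eval_C, map_sub, eval_X]
    have hne : (((w : ↥Y) : Fin n → ℚ)) (idx z) - (((z : ↥Y) : Fin n → ℚ)) (idx z) ≠ 0 :=
      sub_ne_zero.mpr (Ne.symm (hidx z))
    field_simp
  · rw [if_neg hw]
    have hmem : (⟨w, Finset.mem_erase.mpr ⟨hw, Finset.mem_univ _⟩⟩ :
        {z : ↥Y // z ∈ Finset.univ.erase y}) ∈ (Finset.univ.erase y).attach :=
      Finset.mem_attach _ _
    apply Finset.prod_eq_zero hmem
    simp

/-- Some filtration step is everything. -/
lemma exists_Fd_top : ∃ D, Fd n Y D = ⊤ := by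
  classical
  choose p hp using fun y : ↥Y => exists_indicator n Y y
  refine ⟨Finset.univ.sup fun y => (p y).totalDegree, ?_⟩
  rw [eq_top_iff]
  intro v _
  have hv : v = ∑ y : ↥Y, v y • evL n Y (p y) := by
    funext z
    simp only [Finset.sum_apply, Pi.smul_apply, smul_eq_mul, evL_apply, hp]
    simp [Finset.sum_ite_eq]
  rw [hv]
  apply Submodule.sum_mem
  intro y _
  apply Submodule.smul_mem
  exact (mem_Fd n Y).mpr ⟨p y, Finset.le_sup (f := fun y => (p y).totalDegree) (Finset.mem_univ y), rfl⟩

/-- The graded projector `pdL d`. -/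
noncomputable def pdL (d : ℕ) : (↥Y → ℚ) →ₗ[ℚ] (↥Y → ℚ) :=
  prj n Y (Fd n Y d) - prj n Y (Fb n Y d)

lemma pdL_apply (d : ℕ) (v : ↥Y → ℚ) :
    pdL n Y d v = prj n Y (Fd n Y d) v - prj n Y (Fb n Y d) v := rfl

lemma pdL_mem_Fd (d : ℕ) (v : ↥Y → ℚ) : pdL n Y d v ∈ Fd n Y d :=
  Submodule.sub_mem _ (prj_mem n Y _ v) (Fb_le_Fd n Y d (prj_mem n Y _ v))

lemma pdL_mem_orth (d : ℕ) (v : ↥Y → ℚ) :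
    pdL n Y d v ∈ (Bf n Y).orthogonal (Fb n Y d) := by
  have heq : pdL n Y d v =
      (v - prj n Y (Fb n Y d) v) - (v - prj n Y (Fd n Y d) v) := by
    rw [pdL_apply]; abel
  rw [heq]
  exact Submodule.sub_mem _ (sub_prj_mem n Y _ v)
    (LinearMap.BilinForm.orthogonal_le (Fb_le_Fd n Y d) (sub_prj_mem n Y _ v))

lemma pdL_eq_zero_of_mem_Fb (d : ℕ) {v : ↥Y → ℚ} (hv : v ∈ Fb n Y d) :
    pdL n Y d v = 0 := by
  rw [pdL_apply, prj_of_mem n Y _ (Fb_le_Fd n Y d hv), prj_of_mem n Y _ hv, sub_self]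

lemma sub_pdL_mem_Fb (d : ℕ) {v : ↥Y → ℚ} (hv : v ∈ Fd n Y d) :
    v - pdL n Y d v ∈ Fb n Y d := by
  have heq : v - pdL n Y d v = prj n Y (Fb n Y d) v := by
    rw [pdL_apply, prj_of_mem n Y _ hv]; abel
  rw [heq]
  exact prj_mem n Y _ v

/-- Independence of the graded pieces. -/
lemma indep (h : ℕ → (↥Y → ℚ)) (hF : ∀ d, h d ∈ Fd n Y d)
    (hO : ∀ d, h d ∈ (Bf n Y).orthogonal (Fb n Y d)) :
    ∀ N, (∑ d ∈ Finset.range N, h d) = 0 → ∀ d < N, h d = 0 := by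
  intro N
  induction N with
  | zero => intro _ d hd; omega
  | succ N ih =>
    intro hsum d hd
    have hs : (∑ d ∈ Finset.range N, h d) ∈ Fb n Y N := by
      apply Submodule.sum_mem
      intro e he
      rw [Finset.mem_range] at he
      cases N with
      | zero => omega
      | succ N' =>
        show h e ∈ Fd n Y N'
        exact Fd_mono n Y (by omega) (hF e)
    have hN0 : h N = 0 := by
      have hmem : h N ∈ Fb n Y N := by
        have heq : h N = -(∑ d ∈ Finset.range N, h d) := by
          rw [Finset.sum_range_succ] at hsum
          exact eq_neg_of_add_eq_zero_right hsum
        rw [heq]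
        exact Submodule.neg_mem _ hs
      exact eq_zero_of_mem_inf_orth n Y (Fb n Y N) hmem (hO N)
    rcases Nat.lt_succ_iff_lt_or_eq.mp hd with h1 | h1
    · apply ih ?_ d h1
      rw [Finset.sum_range_succ, hN0, add_zero] at hsum
      exact hsum
    · rw [h1]; exact hN0

/-- Pullback along a permutation of `Y`, as a linear map. -/
noncomputable def Up (σ : ↥Y ≃ ↥Y) : (↥Y → ℚ) →ₗ[ℚ] (↥Y → ℚ) where
  toFun v := v ∘ σ
  map_add' := by intros; rfl
  map_smul' := by intros; rfl

@[simp] lemma Up_apply (σ : ↥Y ≃ ↥Y) (v : ↥Y → ℚ) (y : ↥Y) :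
    Up n Y σ v y = v (σ y) := rfl

lemma Bf_Up (σ : ↥Y ≃ ↥Y) (v w : ↥Y → ℚ) :
    Bf n Y (Up n Y σ v) (Up n Y σ w) = Bf n Y v w := by
  simp only [Bf_apply, Up_apply]
  exact Equiv.sum_comp σ (fun y => v y * w y)

lemma Up_Up_symm (σ : ↥Y ≃ ↥Y) (v : ↥Y → ℚ) :
    Up n Y σ (Up n Y σ.symm v) = v := by
  funext y; simp

lemma Up_mem_orth (σ : ↥Y ≃ ↥Y) (W : Submodule ℚ (↥Y → ℚ))
    (hW : ∀ v ∈ W, Up n Y σ.symm v ∈ W) {w : ↥Y → ℚ}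
    (hw : w ∈ (Bf n Y).orthogonal W) :
    Up n Y σ w ∈ (Bf n Y).orthogonal W := by
  rw [LinearMap.BilinForm.mem_orthogonal_iff] at hw ⊢
  intro u hu
  have hu' : Up n Y σ.symm u ∈ W := hW u hu
  have h1 : Bf n Y u (Up n Y σ w) = Bf n Y (Up n Y σ.symm u) w := by
    conv_lhs => rw [← Up_Up_symm n Y σ u]
    exact Bf_Up n Y σ _ _
  show Bf n Y u (Up n Y σ w) = 0
  rw [h1]
  exact hw _ hu'

lemma prj_comm (σ : ↥Y ≃ ↥Y) (W : Submodule ℚ (↥Y → ℚ))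
    (hW1 : ∀ v ∈ W, Up n Y σ v ∈ W) (hW2 : ∀ v ∈ W, Up n Y σ.symm v ∈ W)
    (v : ↥Y → ℚ) :
    prj n Y W (Up n Y σ v) = Up n Y σ (prj n Y W v) := by
  have hdec : Up n Y σ v = Up n Y σ (prj n Y W v) + Up n Y σ (v - prj n Y W v) := by
    rw [← map_add]
    congr 1
    abel
  rw [hdec]
  exact prj_unique n Y W (hW1 _ (prj_mem n Y W v))
    (Up_mem_orth n Y σ W hW2 (sub_prj_mem n Y W v))

section PolyAct

lemma polyAct_eval (M : Matrix (Fin n) (Fin n) ℚ) (f : MvPolynomial (Fin n) ℚ)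
    (y : Fin n → ℚ) :
    eval y (polyAct n M f) = eval (M.mulVec y) f := by
  rw [polyAct, aeval_def, MvPolynomial.algebraMap_eq, ← eval_assoc]
  have : (⇑(eval y) ∘ fun i => ∑ j, C (M i j) * X j) = M.mulVec y := by
    funext i
    simp [Matrix.mulVec, dotProduct, Function.comp]
  rw [this]

lemma polyAct_isHomogeneous (M : Matrix (Fin n) (Fin n) ℚ)
    {f : MvPolynomial (Fin n) ℚ} {d : ℕ} (hf : f.IsHomogeneous d) :
    (polyAct n M f).IsHomogeneous d := by
  have hg : ∀ i, (∑ j, C (M i j) * X j : MvPolynomial (Fin n) ℚ).IsHomogeneous 1 := by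
    intro i
    apply MvPolynomial.IsHomogeneous.sum
    intro j _
    exact (isHomogeneous_X _ _).C_mul _
  have := hf.aeval (fun i => ∑ j, C (M i j) * X j) hg
  rw [one_mul] at this
  exact this

lemma polyAct_homogeneousComponent (M : Matrix (Fin n) (Fin n) ℚ)
    (f : MvPolynomial (Fin n) ℚ) (d : ℕ) :
    homogeneousComponent d (polyAct n M f) = polyAct n M (homogeneousComponent d f) := by
  have hexp : polyAct n M f = ∑ e ∈ Finset.range (f.totalDegree + 1),
      polyAct n M (homogeneousComponent e f) := by
    show aeval _ f = ∑ e ∈ Finset.range (f.totalDegree + 1), aeval _ (homogeneousComponent e f)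
    rw [← map_sum, sum_homogeneousComponent]
  rw [hexp, map_sum]
  have hterm : ∀ e, homogeneousComponent d (polyAct n M (homogeneousComponent e f)) =
      if d = e then polyAct n M (homogeneousComponent e f) else 0 := fun e =>
    homogeneousComponent_of_mem ((mem_homogeneousSubmodule _ _).mpr
      (polyAct_isHomogeneous n M (homogeneousComponent_isHomogeneous e f)))
  simp only [hterm]
  rw [Finset.sum_ite_eq]
  by_cases hdN : d ∈ Finset.range (f.totalDegree + 1)
  · rw [if_pos hdN]
  · rw [if_neg hdN]
    rw [Finset.mem_range] at hdN
    rw [homogeneousComponent_eq_zero _ _ (by omega)]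
    show (0 : MvPolynomial (Fin n) ℚ) = aeval _ (0 : MvPolynomial (Fin n) ℚ)
    rw [map_zero]

lemma polyAct_mem_restrictTotalDegree (M : Matrix (Fin n) (Fin n) ℚ)
    {f : MvPolynomial (Fin n) ℚ} {d : ℕ}
    (hf : f ∈ restrictTotalDegree (Fin n) ℚ d) :
    polyAct n M f ∈ restrictTotalDegree (Fin n) ℚ d := by
  rw [mem_restrictTotalDegree] at hf
  have hexp : polyAct n M f = ∑ e ∈ Finset.range (f.totalDegree + 1),
      polyAct n M (homogeneousComponent e f) := by
    show aeval _ f = ∑ e ∈ Finset.range (f.totalDegree + 1), aeval _ (homogeneousComponent e f)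
    rw [← map_sum, sum_homogeneousComponent]
  rw [hexp]
  apply Submodule.sum_mem
  intro e he
  rw [Finset.mem_range] at he
  rw [mem_restrictTotalDegree]
  calc (polyAct n M (homogeneousComponent e f)).totalDegree ≤ e :=
      (polyAct_isHomogeneous n M (homogeneousComponent_isHomogeneous e f)).totalDegree_le
    _ ≤ d := by omega

end PolyAct

end OrbitHarmonics

open OrbitHarmonics


/-- Orbit harmonics: if `Y ⊆ ℚⁿ` is a finite point set stable under a subgroup
`𝒢 ≤ GLₙ(ℚ)`, then `ℚ[x₁,…,xₙ]/T(Y)` is isomorphic, as an (ungraded)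
`𝒢`-module, to the permutation module `ℚ[Y]` (functions on `Y`, with `𝒢`
acting by permuting the points); in particular its dimension is `|Y|`.
The group acts on polynomials by linear substitution: `g · f = f ∘ g⁻¹`. -/
theorem orbit_harmonics_equivariant (n : ℕ)
    (𝒢 : Subgroup (Matrix.GeneralLinearGroup (Fin n) ℚ))
    (Y : Set (Fin n → ℚ)) (hY : Y.Finite)
    (hstab : ∀ g ∈ 𝒢, ∀ y ∈ Y,
      Matrix.mulVec (g : Matrix (Fin n) (Fin n) ℚ) y ∈ Y) :
    (∃ e : (MvPolynomial (Fin n) ℚ ⧸ topDegreeIdeal n Y) ≃ₗ[ℚ] (↥Y → ℚ),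
      ∀ g (hg : g ∈ 𝒢) (f : MvPolynomial (Fin n) ℚ) (y : ↥Y),
        e (Ideal.Quotient.mk _ (polyAct n (↑(g⁻¹) : Matrix (Fin n) (Fin n) ℚ) f)) y =
          e (Ideal.Quotient.mk _ f)
            ⟨Matrix.mulVec (↑(g⁻¹) : Matrix (Fin n) (Fin n) ℚ) ↑y,
              hstab g⁻¹ (inv_mem hg) ↑y y.2⟩) ∧
    Module.finrank ℚ (MvPolynomial (Fin n) ℚ ⧸ topDegreeIdeal n Y) =
      Y.ncard := by
  classical
  haveI : Fintype ↥Y := hY.fintype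
  obtain ⟨D, hD⟩ := exists_Fd_top n Y
  -- the assembled linear map Φ
  set Φ : MvPolynomial (Fin n) ℚ →ₗ[ℚ] (↥Y → ℚ) :=
    ∑ d ∈ Finset.range (D+1), (pdL n Y d) ∘ₗ (evL n Y) ∘ₗ homogeneousComponent d with hΦdef
  have hΦ : ∀ f, Φ f = ∑ d ∈ Finset.range (D+1),
      pdL n Y d (evL n Y (homogeneousComponent d f)) := by
    intro f
    rw [hΦdef]
    simp [LinearMap.sum_apply, LinearMap.comp_apply]
  -- T(Y) is contained in the kernel
  have hTker : ∀ f, f ∈ topDegreeIdeal n Y → Φ f = 0 := by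
    intro f hf
    rw [hΦ]
    apply Finset.sum_eq_zero
    intro d _
    exact pdL_eq_zero_of_mem_Fb n Y d (evL_homogeneousComponent_mem_Fb n Y hf d)
  -- the kernel is contained in T(Y)
  have hkerT : ∀ f, Φ f = 0 → f ∈ topDegreeIdeal n Y := by
    intro f hf
    rw [hΦ] at hf
    have hterm := indep n Y (fun d => pdL n Y d (evL n Y (homogeneousComponent d f)))
      (fun d => pdL_mem_Fd n Y d _) (fun d => pdL_mem_orth n Y d _) (D+1) hf
    have hcomp : ∀ d, homogeneousComponent d f ∈ topDegreeIdeal n Y := by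
      intro d
      by_cases hdD : d ≤ D
      · have h0 : pdL n Y d (evL n Y (homogeneousComponent d f)) = 0 := hterm d (by omega)
        have hFdmem : evL n Y (homogeneousComponent d f) ∈ Fd n Y d :=
          (mem_Fd n Y).mpr ⟨homogeneousComponent d f,
            (homogeneousComponent_isHomogeneous d f).totalDegree_le, rfl⟩
        have h1 := sub_pdL_mem_Fb n Y d hFdmem
        rw [h0, sub_zero] at h1
        exact mem_T_of_homogeneous n Y (homogeneousComponent_isHomogeneous d f) h1
      · apply mem_T_of_homogeneous n Y (homogeneousComponent_isHomogeneous d f)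
        have hFb : Fb n Y d = ⊤ := by
          obtain ⟨d', rfl⟩ : ∃ d', d = d' + 1 := ⟨d - 1, by omega⟩
          show Fd n Y d' = ⊤
          have h1 : Fd n Y D ≤ Fd n Y d' := Fd_mono n Y (by omega)
          rw [hD] at h1
          exact top_le_iff.mp h1
        rw [hFb]
        trivial
    have hmemT : (∑ d ∈ Finset.range (f.totalDegree + 1), homogeneousComponent d f)
        ∈ topDegreeIdeal n Y := Ideal.sum_mem _ (fun d _ => hcomp d)
    rwa [sum_homogeneousComponent f] at hmemT
  -- surjectivity
  have hstep : ∀ d, d ≤ D → Fb n Y d ≤ LinearMap.range Φ → Fd n Y d ≤ LinearMap.range Φ := by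
    intro d hdD hFbr v hv
    obtain ⟨f, hfdeg, rfl⟩ := (mem_Fd n Y).mp hv
    have hfsum : (∑ e ∈ Finset.range (D+1), homogeneousComponent e f) = f := by
      have h1 := sum_homogeneousComponent f
      have h2 : (∑ e ∈ Finset.range (f.totalDegree + 1), homogeneousComponent e f)
          = ∑ e ∈ Finset.range (D+1), homogeneousComponent e f := by
        apply Finset.sum_subset
        · intro x hx
          rw [Finset.mem_range] at hx ⊢
          have : f.totalDegree ≤ D := le_trans hfdeg hdD
          omega
        · intro x _ hx2
          rw [Finset.mem_range] at hx2
          exact homogeneousComponent_eq_zero _ _ (by omega)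
      rw [← h2, h1]
    have hevf : evL n Y f = ∑ e ∈ Finset.range (D+1), evL n Y (homogeneousComponent e f) := by
      conv_lhs => rw [← hfsum]
      rw [map_sum]
    have hsub : evL n Y f - Φ f ∈ Fb n Y d := by
      rw [hΦ f, hevf, ← Finset.sum_sub_distrib]
      apply Submodule.sum_mem
      intro e _
      by_cases he2 : e ≤ f.totalDegree
      · have hmemFd : evL n Y (homogeneousComponent e f) ∈ Fd n Y e :=
          (mem_Fd n Y).mpr ⟨homogeneousComponent e f,
            (homogeneousComponent_isHomogeneous e f).totalDegree_le, rfl⟩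
        exact Fb_mono n Y (le_trans he2 hfdeg) (sub_pdL_mem_Fb n Y e hmemFd)
      · have h0 : homogeneousComponent e f = 0 :=
          homogeneousComponent_eq_zero _ _ (by omega)
        rw [h0]
        simp
    have hdecomp : evL n Y f = (evL n Y f - Φ f) + Φ f := by abel
    rw [hdecomp]
    exact Submodule.add_mem _ (hFbr hsub) (LinearMap.mem_range_self Φ f)
  -- the filtration is exhausted by the range
  have hrange : ∀ d, d ≤ D → Fd n Y d ≤ LinearMap.range Φ := by
    intro d
    induction d with
    | zero => intro _; exact hstep 0 (by omega) bot_le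
    | succ d ih => intro hd; exact hstep (d+1) hd (ih (by omega))
  have hsurj : Function.Surjective Φ := by
    rw [← LinearMap.range_eq_top]
    have h1 := hrange D le_rfl
    rw [hD] at h1
    exact top_le_iff.mp h1
  -- build the linear equivalence
  have hle : (topDegreeIdeal n Y).restrictScalars ℚ ≤ LinearMap.ker Φ := by
    intro f hf
    exact LinearMap.mem_ker.mpr (hTker f hf)
  set e0 : (MvPolynomial (Fin n) ℚ ⧸ (topDegreeIdeal n Y).restrictScalars ℚ) →ₗ[ℚ] (↥Y → ℚ) :=
    Submodule.liftQ ((topDegreeIdeal n Y).restrictScalars ℚ) Φ hle with he0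
  have hinj : LinearMap.ker e0 = ⊥ := by
    apply Submodule.ker_liftQ_eq_bot
    intro f hf
    exact hkerT f (LinearMap.mem_ker.mp hf)
  have hsurj0 : Function.Surjective e0 := by
    intro v
    obtain ⟨f, hf⟩ := hsurj v
    exact ⟨Submodule.Quotient.mk f, by rw [he0, Submodule.liftQ_apply]; exact hf⟩
  let e1 : (MvPolynomial (Fin n) ℚ ⧸ (topDegreeIdeal n Y).restrictScalars ℚ) ≃ₗ[ℚ] (↥Y → ℚ) :=
    LinearEquiv.ofBijective e0 ⟨LinearMap.ker_eq_bot.mp hinj, hsurj0⟩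
  let e : (MvPolynomial (Fin n) ℚ ⧸ topDegreeIdeal n Y) ≃ₗ[ℚ] (↥Y → ℚ) :=
    ((Submodule.Quotient.restrictScalarsEquiv ℚ
      ((topDegreeIdeal n Y) : Submodule (MvPolynomial (Fin n) ℚ)
        (MvPolynomial (Fin n) ℚ))).symm.trans e1 : _)
  have hmk : ∀ f, e (Ideal.Quotient.mk (topDegreeIdeal n Y) f) = Φ f := by
    intro f
    show e1 ((Submodule.Quotient.restrictScalarsEquiv ℚ _).symm
      (Ideal.Quotient.mk (topDegreeIdeal n Y) f)) = Φ f
    rw [← Ideal.Quotient.mk_eq_mk, Submodule.Quotient.restrictScalarsEquiv_symm_mk]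
    show e0 (Submodule.Quotient.mk f) = Φ f
    rw [he0, Submodule.liftQ_apply]
  constructor
  · refine ⟨e, ?_⟩
    intro g hg f y
    have hstabg : ∀ z ∈ Y, Matrix.mulVec ((↑(g⁻¹) : Matrix (Fin n) (Fin n) ℚ)) z ∈ Y :=
      hstab g⁻¹ (inv_mem hg)
    have hstabg' : ∀ z ∈ Y, Matrix.mulVec ((↑g : Matrix (Fin n) (Fin n) ℚ)) z ∈ Y :=
      hstab g hg
    let σ : ↥Y ≃ ↥Y :=
      { toFun := fun z => ⟨(↑(g⁻¹) : Matrix (Fin n) (Fin n) ℚ).mulVec z, hstabg z z.2⟩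
        invFun := fun z => ⟨(↑g : Matrix (Fin n) (Fin n) ℚ).mulVec z, hstabg' z z.2⟩
        left_inv := by
          intro z
          apply Subtype.ext
          show (↑g : Matrix (Fin n) (Fin n) ℚ).mulVec
            ((↑(g⁻¹) : Matrix (Fin n) (Fin n) ℚ).mulVec ↑z) = ↑z
          rw [Matrix.mulVec_mulVec]
          have h1 : (↑g : Matrix (Fin n) (Fin n) ℚ) * (↑(g⁻¹) : Matrix (Fin n) (Fin n) ℚ) = 1 :=
            Units.mul_inv g
          rw [h1, Matrix.one_mulVec]
        right_inv := by
          intro z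
          apply Subtype.ext
          show (↑(g⁻¹) : Matrix (Fin n) (Fin n) ℚ).mulVec
            ((↑g : Matrix (Fin n) (Fin n) ℚ).mulVec ↑z) = ↑z
          rw [Matrix.mulVec_mulVec]
          have h1 : (↑(g⁻¹) : Matrix (Fin n) (Fin n) ℚ) * (↑g : Matrix (Fin n) (Fin n) ℚ) = 1 :=
            Units.inv_mul g
          rw [h1, Matrix.one_mulVec] }
    -- stability of the filtration under σ and σ.symm
    have hgen : ∀ (Mm : Matrix (Fin n) (Fin n) ℚ) (τ : ↥Y ≃ ↥Y),
        (∀ z : ↥Y, ((τ z : ↥Y) : Fin n → ℚ) = Mm.mulVec ↑z) →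
        ∀ d, ∀ v ∈ Fd n Y d, Up n Y τ v ∈ Fd n Y d := by
      intro Mm τ hτ d v hv
      obtain ⟨f', hdeg, rfl⟩ := (mem_Fd n Y).mp hv
      refine (mem_Fd n Y).mpr ⟨polyAct n Mm f', ?_, ?_⟩
      · have h2 := polyAct_mem_restrictTotalDegree n Mm (f := f') (d := d)
          (by rw [mem_restrictTotalDegree]; exact hdeg)
        rwa [mem_restrictTotalDegree] at h2
      · funext z
        rw [evL_apply, polyAct_eval, Up_apply, evL_apply, hτ z]
    have hFd_stab : ∀ d, ∀ v ∈ Fd n Y d, Up n Y σ v ∈ Fd n Y d :=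
      hgen (↑(g⁻¹) : Matrix (Fin n) (Fin n) ℚ) σ (fun z => rfl)
    have hFd_stab' : ∀ d, ∀ v ∈ Fd n Y d, Up n Y σ.symm v ∈ Fd n Y d :=
      hgen (↑g : Matrix (Fin n) (Fin n) ℚ) σ.symm (fun z => rfl)
    have hFb_stab : ∀ d, ∀ v ∈ Fb n Y d, Up n Y σ v ∈ Fb n Y d := by
      intro d
      cases d with
      | zero =>
        intro v hv
        have : v = 0 := hv
        simp [this]
      | succ d => exact hFd_stab d
    have hFb_stab' : ∀ d, ∀ v ∈ Fb n Y d, Up n Y σ.symm v ∈ Fb n Y d := by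
      intro d
      cases d with
      | zero =>
        intro v hv
        have : v = 0 := hv
        simp [this]
      | succ d => exact hFd_stab' d
    have hUp_pdL : ∀ d v, pdL n Y d (Up n Y σ v) = Up n Y σ (pdL n Y d v) := by
      intro d v
      rw [pdL_apply, pdL_apply,
        prj_comm n Y σ _ (hFd_stab d) (hFd_stab' d) v,
        prj_comm n Y σ _ (hFb_stab d) (hFb_stab' d) v,
        map_sub]
    have hevUp : ∀ h : MvPolynomial (Fin n) ℚ,
        evL n Y (polyAct n (↑(g⁻¹) : Matrix (Fin n) (Fin n) ℚ) h) =
          Up n Y σ (evL n Y h) := by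
      intro h
      funext z
      rw [evL_apply, polyAct_eval, Up_apply, evL_apply]
      rfl
    have hΦ_equiv : Φ (polyAct n (↑(g⁻¹) : Matrix (Fin n) (Fin n) ℚ) f)
        = Up n Y σ (Φ f) := by
      rw [hΦ, hΦ, map_sum]
      apply Finset.sum_congr rfl
      intro d _
      rw [polyAct_homogeneousComponent, hevUp, hUp_pdL]
    rw [hmk, hmk, hΦ_equiv]
    exact rfl
  · rw [e.finrank_eq, Module.finrank_fintype_fun_eq_card, ← Nat.card_coe_set_eq,
      Nat.card_eq_fintype_card]
end

section
/- Let G be a connected graph on vertex set [n]. For each break divisor D on G (viewed as a point in ℤ^n) and each nonempty proper S ⊂ [n] with G[S] and G[S̄] connected, the polynomial ∏_{i = g(G[S])}^{g(G) − g(G[S̄])} (x_S − i), where x_S = Σ_{j∈S} x_j, vanishes on the set of break divisors of G; moreover its top-degree homogeneous component is x_S^{d(S)}. -/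
open MvPolynomial in
lemma prod_linear_aux (n : ℕ) (S : Finset (Fin n)) (t : Finset ℤ) :
    ∃ r : MvPolynomial (Fin n) ℚ,
      (∏ i ∈ t, ((∑ j ∈ S, X j) - C (i : ℚ))) = (∑ j ∈ S, X j) ^ t.card + r ∧
      (r = 0 ∨ r.totalDegree < t.card) := by
  classical
  refine Finset.induction_on t ⟨0, by simp, Or.inl rfl⟩ ?_
  intro a t ha ih
  obtain ⟨r, hr, hdeg⟩ := ih
  set xS := (∑ j ∈ S, X j : MvPolynomial (Fin n) ℚ) with hxS
  have hxd : xS.totalDegree ≤ 1 := by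
    refine (totalDegree_finset_sum S fun j => (X j : MvPolynomial (Fin n) ℚ)).trans ?_
    exact Finset.sup_le fun j _ => by rw [totalDegree_X]
  refine ⟨xS * r - C (a : ℚ) * (xS ^ t.card + r), ?_, Or.inr ?_⟩
  · rw [Finset.prod_insert ha, hr, Finset.card_insert_of_notMem ha]
    ring
  · rw [Finset.card_insert_of_notMem ha]
    have hpow : (xS ^ t.card).totalDegree ≤ t.card := by
      refine (totalDegree_pow _ _).trans ?_
      calc t.card * xS.totalDegree ≤ t.card * 1 := Nat.mul_le_mul_left _ hxd
      _ = t.card := Nat.mul_one _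
    have h2 : (C (a : ℚ) * (xS ^ t.card + r)).totalDegree ≤ t.card := by
      refine (totalDegree_mul _ _).trans ?_
      rw [totalDegree_C, Nat.zero_add]
      refine (totalDegree_add _ _).trans ?_
      rcases hdeg with h | h
      · simp [h, hpow]
      · exact max_le hpow h.le
    have h1 : (xS * r).totalDegree ≤ t.card := by
      rcases hdeg with h | h
      · simp [h]
      · refine (totalDegree_mul _ _).trans ?_
        omega
    have := (totalDegree_add (xS * r) (-(C (a : ℚ) * (xS ^ t.card + r))))
    rw [totalDegree_neg] at this
    rw [sub_eq_add_neg]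
    omega

open MvPolynomial in
/-- For a bond `∂(S)`, the polynomial `∏_{i=g(G[S])}^{g(G)−g(G[S̄])} (x_S − i)`
vanishes on all break divisors of `G`, and its top-degree homogeneous
component is `x_S^{d(S)}`. -/
theorem bond_polynomial_vanishes {E : Type} [Fintype E] (n : ℕ)
    (G : Multigraph (Fin n) E) (hG : G.simple.Connected)
    (S : Finset (Fin n)) (hS : S.Nonempty) (hSne : S ≠ Finset.univ)
    (hconnS : (G.simple.induce (S : Set (Fin n))).Connected)
    (hconnSc : (G.simple.induce ((Sᶜ : Finset (Fin n)) : Set (Fin n))).Connected) :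
    (∀ D : Fin n → ℤ, G.IsBreakDivisor D →
      eval (fun j => (D j : ℚ))
        (∏ i ∈ Finset.Icc (G.inducedGenus S) (G.genus - G.inducedGenus Sᶜ),
          ((∑ j ∈ S, X j) - C (i : ℚ))) = 0) ∧
    homogeneousComponent
        (∏ i ∈ Finset.Icc (G.inducedGenus S) (G.genus - G.inducedGenus Sᶜ),
          ((∑ j ∈ S, X j) - C (i : ℚ)) : MvPolynomial (Fin n) ℚ).totalDegree
        (∏ i ∈ Finset.Icc (G.inducedGenus S) (G.genus - G.inducedGenus Sᶜ),
          ((∑ j ∈ S, X j) - C (i : ℚ))) =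
      (∑ j ∈ S, X j) ^ (G.cutEdges S).ncard := by
  classical
  -- an element of each edge
  have hmem : ∀ e : E, ∃ x, x ∈ G.ends e := by
    intro e
    induction G.ends e using Sym2.ind with
    | _ x y => exact ⟨x, Sym2.mem_mk_left x y⟩
  -- graphs induced by inside edges agree with induced simple graphs
  have hinduce : ∀ T : Finset (Fin n),
      (G.subSimple (G.insideEdges T)).induce (T : Set (Fin n)) =
        G.simple.induce (T : Set (Fin n)) := by
    intro T
    ext u v
    constructor
    · rintro ⟨hne, e, _, hu, hv⟩
      exact ⟨hne, e, hu, hv⟩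
    · rintro ⟨hne, e, hu, hv⟩
      refine ⟨hne, e, ?_, hu, hv⟩
      intro w hw
      have hne' : (u : Fin n) ≠ (v : Fin n) := hne
      have : G.ends e = s((u : Fin n), (v : Fin n)) :=
        (Sym2.mem_and_mem_iff hne').mp ⟨hu, hv⟩
      rw [this] at hw
      rcases Sym2.mem_iff.mp hw with h | h
      · rw [h]; exact u.2
      · rw [h]; exact v.2
  -- edge partition
  have hAB : Disjoint (G.insideEdges S) (G.insideEdges Sᶜ) := by
    rw [Set.disjoint_left]
    intro e heA heB
    obtain ⟨x, hx⟩ := hmem e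
    exact absurd (heA x hx) (by simpa using heB x hx)
  have hABC : Disjoint (G.insideEdges S ∪ G.insideEdges Sᶜ) (G.cutEdges S) := by
    rw [Set.disjoint_left]
    rintro e (he | he) ⟨⟨u, hu, huS⟩, ⟨v, hv, hvS⟩⟩
    · exact hvS (he v hv)
    · exact absurd (he u hu) (by simpa using huS)
  have hcover : G.insideEdges S ∪ G.insideEdges Sᶜ ∪ G.cutEdges S = Set.univ := by
    ext e
    simp only [Set.mem_univ, iff_true, Set.mem_union]
    by_cases hA : e ∈ G.insideEdges S
    · exact Or.inl (Or.inl hA)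
    by_cases hB : e ∈ G.insideEdges Sᶜ
    · exact Or.inl (Or.inr hB)
    · right
      simp only [Multigraph.insideEdges, Set.mem_setOf_eq, not_forall] at hA hB
      obtain ⟨v, hv, hvS⟩ := hA
      obtain ⟨u, hu, huS⟩ := hB
      exact ⟨⟨u, hu, by simpa using huS⟩, ⟨v, hv, hvS⟩⟩
  have hE : Fintype.card E =
      (G.insideEdges S).ncard + (G.insideEdges Sᶜ).ncard + (G.cutEdges S).ncard := by
    have h1 : (Set.univ : Set E).ncard = Fintype.card E := by
      rw [Set.ncard_univ, Nat.card_eq_fintype_card]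
    rw [← h1, ← hcover,
      Set.ncard_union_eq hABC (Set.toFinite _) (Set.toFinite _),
      Set.ncard_union_eq hAB (Set.toFinite _) (Set.toFinite _)]
  have hV : S.card + Sᶜ.card = n := by
    rw [Finset.card_add_card_compl, Fintype.card_fin]
  -- the key integer identity
  have hkey : G.genus - G.inducedGenus Sᶜ + 1 - G.inducedGenus S =
      ((G.cutEdges S).ncard : ℤ) := by
    simp only [Multigraph.genus, Multigraph.inducedGenus, Fintype.card_fin]
    omega
  have hcard : (Finset.Icc (G.inducedGenus S) (G.genus - G.inducedGenus Sᶜ)).card =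
      (G.cutEdges S).ncard := by
    rw [Int.card_Icc]
    omega
  constructor
  · -- vanishing
    intro D hD
    obtain ⟨hpos, hsum, hprop⟩ := hD
    have hlow : G.inducedGenus S ≤ ∑ v ∈ S, D v := by
      have := hprop S (G.insideEdges S) (fun e he => he)
        ((hinduce S).symm ▸ hconnS)
      simpa [Multigraph.inducedGenus] using this
    have hupZ : G.inducedGenus Sᶜ ≤ ∑ v ∈ Sᶜ, D v := by
      have := hprop Sᶜ (G.insideEdges Sᶜ) (fun e he => he)
        ((hinduce Sᶜ).symm ▸ hconnSc)
      simpa [Multigraph.inducedGenus] using this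
    have hsplit : ∑ v ∈ S, D v + ∑ v ∈ Sᶜ, D v = G.genus := by
      rw [Finset.sum_add_sum_compl S D] at *
      exact hsum
    have hhigh : ∑ v ∈ S, D v ≤ G.genus - G.inducedGenus Sᶜ := by omega
    rw [map_prod]
    refine Finset.prod_eq_zero (Finset.mem_Icc.mpr ⟨hlow, hhigh⟩) ?_
    rw [map_sub, eval_C, map_sum]
    simp only [eval_X]
    push_cast
    ring
  · -- top homogeneous component
    obtain ⟨r, hr, hdeg⟩ := prod_linear_aux n S
      (Finset.Icc (G.inducedGenus S) (G.genus - G.inducedGenus Sᶜ))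
    set d := (Finset.Icc (G.inducedGenus S) (G.genus - G.inducedGenus Sᶜ)).card with hd
    set xS := (∑ j ∈ S, X j : MvPolynomial (Fin n) ℚ) with hxS
    have hhom : xS.IsHomogeneous 1 :=
      IsHomogeneous.sum S _ 1 fun j _ => isHomogeneous_X _ _
    have hxne : xS ≠ 0 := by
      obtain ⟨j, hj⟩ := hS
      intro h
      have := congrArg (coeff (Finsupp.single j 1)) h
      rw [hxS, coeff_sum] at this
      rw [Finset.sum_eq_single j (fun b _ hbj => by
        rw [coeff_X', if_neg]
        intro hh
        exact hbj (by simpa [Finsupp.single_left_inj] using hh))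
        (fun hj' => absurd hj hj')] at this
      simp [coeff_X'] at this
    have hpowhom : (xS ^ d).IsHomogeneous d := by
      simpa using hhom.pow d
    have hpowne : xS ^ d ≠ 0 := pow_ne_zero _ hxne
    have hpowdeg : (xS ^ d).totalDegree = d := hpowhom.totalDegree hpowne
    have hcomp : homogeneousComponent d (xS ^ d) = xS ^ d := by
      rw [homogeneousComponent_of_mem ((mem_homogeneousSubmodule _ _).mpr hpowhom)]
      simp
    rw [← hcard]
    rcases hdeg with h0 | hlt
    · rw [hr, h0, add_zero, hpowdeg, hcomp]
    · have htd : (xS ^ d + r).totalDegree = d := by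
        rw [totalDegree_add_eq_left_of_totalDegree_lt (by rw [hpowdeg]; exact hlt),
          hpowdeg]
      rw [hr, htd, map_add, hcomp, homogeneousComponent_eq_zero _ _ hlt, add_zero]
end
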